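/- arXiv:1508.00840 — 6 statements merged into one kernel-verified Lean document; each statement's English description precedes it below -/
import Mathlib

section
/- A priori sup bound via the maximum principle (paper equation (3)): let ε > 0, σ > 0, κ ≥ 0, and let u be C² on K₀, continuous on the closure of K₀, and solve the (ε,σ,κ)-Dirichlet problem on K₀ (K₀ having compact closure). Then 0 ≤ u(x) ≤ κ/(σε) for every x in the closure of K₀. -/
open scoped BigOperators RealInnerProductSpace

/-- Divergence of a vector field on Euclidean space. -/
noncomputable def vdiv {n : ℕ} (F : EuclideanSpace ℝ (Fin n) → EuclideanSpace ℝ (Fin n))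
    (x : EuclideanSpace ℝ (Fin n)) : ℝ :=
  ∑ i, fderiv ℝ F x (EuclideanSpace.single i 1) i

/-- The regularized level set operator
`Q_{ε,σ,κ}[w] = div(Dw/√(ε²+|Dw|²)) + κ/√(ε²+|Dw|²) − σw`. -/
noncomputable def Qop {n : ℕ} (ε σ κ : ℝ) (w : EuclideanSpace ℝ (Fin n) → ℝ)
    (x : EuclideanSpace ℝ (Fin n)) : ℝ :=
  vdiv (fun y => (Real.sqrt (ε ^ 2 + ‖gradient w y‖ ^ 2))⁻¹ • gradient w y) x
    + κ / Real.sqrt (ε ^ 2 + ‖gradient w x‖ ^ 2) - σ * w x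

/-- `u` solves the (ε,σ,κ)-Dirichlet problem on `K`:
`Q_{ε,σ,κ}[u] = 0` in `K` and `u = 0` on `∂K`. -/
def SolvesDirichlet {n : ℕ} (ε σ κ : ℝ) (K : Set (EuclideanSpace ℝ (Fin n)))
    (u : EuclideanSpace ℝ (Fin n) → ℝ) : Prop :=
  (∀ x ∈ K, Qop ε σ κ u x = 0) ∧ ∀ x ∈ frontier K, u x = 0

open Filter Set

section OneD

/-- 1D second-derivative test at a local max. -/
lemma oneD_max {f g : ℝ → ℝ} {s : Set ℝ} (hs : s ∈ nhds (0:ℝ))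
    (hmax : ∀ t ∈ s, f t ≤ f 0)
    (hf : ∀ t ∈ s, HasDerivAt f (g t) t) {L : ℝ} (hL : HasDerivAt g L 0) :
    L ≤ 0 := by
  by_contra hcon
  push_neg at hcon
  have h0s : (0:ℝ) ∈ s := mem_of_mem_nhds hs
  have hloc : IsLocalMax f 0 := by filter_upwards [hs] with t ht using hmax t ht
  have hg0 : g 0 = 0 := hloc.hasDerivAt_eq_zero (hf 0 h0s)
  have hslope : Filter.Tendsto (slope g 0) (nhdsWithin 0 {(0:ℝ)}ᶜ) (nhds L) :=
    hasDerivAt_iff_tendsto_slope.mp hL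
  have h2 : ∀ᶠ t in nhdsWithin (0:ℝ) {(0:ℝ)}ᶜ, 0 < slope g 0 t :=
    hslope.eventually (eventually_gt_nhds hcon)
  have h1 : ∀ᶠ t in nhdsWithin (0:ℝ) (Set.Ioi 0), 0 < slope g 0 t :=
    h2.filter_mono (nhdsWithin_mono 0
      (fun t (ht : (0:ℝ) < t) => Set.mem_compl_singleton_iff.mpr ht.ne'))
  have h3 : ∀ᶠ t in nhdsWithin (0:ℝ) (Set.Ioi 0), 0 < g t ∧ t ∈ s := by
    have hsmem : ∀ᶠ t in nhdsWithin (0:ℝ) (Set.Ioi 0), t ∈ s :=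
      mem_nhdsWithin_of_mem_nhds hs
    filter_upwards [h1, hsmem, self_mem_nhdsWithin] with t h1t hst htpos
    have htpos' : (0:ℝ) < t := htpos
    refine ⟨?_, hst⟩
    have hslope_eq : slope g 0 t = g t / t := by
      rw [slope_def_field, hg0, sub_zero, sub_zero]
    rw [hslope_eq] at h1t
    have h4 := mul_pos h1t htpos'
    rwa [div_mul_cancel₀ _ (ne_of_gt htpos')] at h4
  obtain ⟨b, hb, hIoo⟩ := mem_nhdsGT_iff_exists_Ioo_subset.mp h3
  have hb' : (0:ℝ) < b := hb
  have hcb : b / 2 ∈ Set.Ioo 0 b := ⟨half_pos hb', half_lt_self hb'⟩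
  have hIccs : Set.Icc 0 (b/2) ⊆ s := by
    intro t ht
    rcases eq_or_lt_of_le ht.1 with h | h
    · rwa [← h]
    · exact (hIoo ⟨h, lt_of_le_of_lt ht.2 hcb.2⟩).2
  have hmono : StrictMonoOn f (Set.Icc 0 (b/2)) := by
    apply strictMonoOn_of_deriv_pos (convex_Icc 0 (b/2))
    · intro t ht
      exact (hf t (hIccs ht)).continuousAt.continuousWithinAt
    · intro t ht
      rw [interior_Icc] at ht
      have hts : t ∈ Set.Ioo 0 b := ⟨ht.1, lt_trans ht.2 hcb.2⟩
      rw [(hf t (hIoo hts).2).deriv]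
      exact (hIoo hts).1
  have hlt : f 0 < f (b/2) :=
    hmono ⟨le_refl 0, (half_pos hb').le⟩ ⟨(half_pos hb').le, le_refl _⟩ (half_pos hb')
  exact absurd (hmax (b/2) (hIccs ⟨(half_pos hb').le, le_refl _⟩)) (not_le.mpr hlt)

lemma oneD_min {f g : ℝ → ℝ} {s : Set ℝ} (hs : s ∈ nhds (0:ℝ))
    (hmin : ∀ t ∈ s, f 0 ≤ f t)
    (hf : ∀ t ∈ s, HasDerivAt f (g t) t) {L : ℝ} (hL : HasDerivAt g L 0) :
    0 ≤ L := by
  have := oneD_max (f := fun t => -f t) (g := fun t => -g t) hs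
    (fun t ht => neg_le_neg (hmin t ht)) (fun t ht => (hf t ht).neg) hL.neg
  linarith

end OneD

lemma hess_nonpos {n : ℕ} {K : Set (EuclideanSpace ℝ (Fin n))} (hK : IsOpen K)
    {u : EuclideanSpace ℝ (Fin n) → ℝ} (hu2 : ContDiffOn ℝ 2 u K) {x₀} (hx₀ : x₀ ∈ K)
    (hmax : IsLocalMax u x₀) (i : Fin n) :
    fderiv ℝ (fderiv ℝ u) x₀ (EuclideanSpace.single i 1) (EuclideanSpace.single i 1) ≤ 0 := by
  set e : EuclideanSpace ℝ (Fin n) := EuclideanSpace.single i 1 with he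
  set line : ℝ → EuclideanSpace ℝ (Fin n) := fun t => x₀ + t • e with hline_def
  have hline : ∀ t : ℝ, HasDerivAt line e t := by
    intro t
    simpa [hline_def] using ((hasDerivAt_id t).smul_const e).const_add x₀
  have hline0 : line 0 = x₀ := by simp [hline_def]
  have hWmem : {y | u y ≤ u x₀} ∈ nhds x₀ := hmax
  have hs : line ⁻¹' (K ∩ {y | u y ≤ u x₀}) ∈ nhds (0:ℝ) := by
    have hcont : ContinuousAt line 0 := (hline 0).continuousAt
    exact hcont.preimage_mem_nhds (by rw [hline0]; exact Filter.inter_mem (hK.mem_nhds hx₀) hWmem)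
  have hfd : ∀ t ∈ line ⁻¹' (K ∩ {y | u y ≤ u x₀}),
      HasDerivAt (fun r => u (line r)) (fderiv ℝ u (line t) e) t := by
    intro t ht
    have hud : DifferentiableAt ℝ u (line t) :=
      (hu2.contDiffAt (hK.mem_nhds ht.1)).differentiableAt (by norm_num)
    exact hud.hasFDerivAt.comp_hasDerivAt t (hline t)
  have hDd : DifferentiableAt ℝ (fderiv ℝ u) x₀ :=
    ((hu2.contDiffAt (hK.mem_nhds hx₀)).fderiv_right
      (by norm_num : (1:WithTop ℕ∞)+1 ≤ 2)).differentiableAt one_ne_zero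
  have hcomp : HasDerivAt (fun t => fderiv ℝ u (line t)) (fderiv ℝ (fderiv ℝ u) x₀ e) 0 := by
    have h1 : HasFDerivAt (fderiv ℝ u) (fderiv ℝ (fderiv ℝ u) x₀) (line 0) := by
      rw [hline0]; exact hDd.hasFDerivAt
    exact h1.comp_hasDerivAt 0 (hline 0)
  have hg : HasDerivAt (fun t => fderiv ℝ u (line t) e)
      (fderiv ℝ (fderiv ℝ u) x₀ e e) 0 := by
    have := hcomp.clm_apply (hasDerivAt_const 0 e)
    simpa using this
  refine oneD_max hs (fun t ht => ?_) hfd hg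
  simpa [hline0] using ht.2

lemma qop_eq {n : ℕ} {K : Set (EuclideanSpace ℝ (Fin n))} (hK : IsOpen K) {ε : ℝ} (σ κ : ℝ)
    (hε : 0 < ε) {u : EuclideanSpace ℝ (Fin n) → ℝ} (hu2 : ContDiffOn ℝ 2 u K)
    {x₀} (hx₀ : x₀ ∈ K) (h0 : fderiv ℝ u x₀ = 0) :
    Qop ε σ κ u x₀ = ε⁻¹ * (∑ i, fderiv ℝ (fderiv ℝ u) x₀ (EuclideanSpace.single i 1)
      (EuclideanSpace.single i 1)) + κ / ε - σ * u x₀ := by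
  classical
  set A : ((EuclideanSpace ℝ (Fin n)) →L[ℝ] ℝ) →L[ℝ] EuclideanSpace ℝ (Fin n) :=
    (EuclideanSpace.equiv (Fin n) ℝ).symm.toContinuousLinearMap.comp
      (ContinuousLinearMap.pi fun i => ContinuousLinearMap.apply ℝ ℝ
        (EuclideanSpace.single i 1)) with hA
  have hAcoord : ∀ (w : EuclideanSpace ℝ (Fin n) →L[ℝ] ℝ) (i : Fin n),
      (A w) i = w (EuclideanSpace.single i 1) := fun w i => rfl
  have hgA : ∀ y, gradient u y = A (fderiv ℝ u y) := by
    intro y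
    ext i
    have h3 : gradient u y
        = (InnerProductSpace.toDual ℝ (EuclideanSpace ℝ (Fin n))).symm (fderiv ℝ u y) := rfl
    rw [h3, hAcoord]
    have h1 := InnerProductSpace.toDual_symm_apply (𝕜 := ℝ)
      (E := EuclideanSpace ℝ (Fin n)) (x := EuclideanSpace.single i 1) (y := fderiv ℝ u y)
    rw [EuclideanSpace.inner_single_right] at h1
    simpa using h1
  have hDd : DifferentiableAt ℝ (fderiv ℝ u) x₀ :=
    ((hu2.contDiffAt (hK.mem_nhds hx₀)).fderiv_right
      (by norm_num : (1:WithTop ℕ∞)+1 ≤ 2)).differentiableAt one_ne_zero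
  have hVd : DifferentiableAt ℝ (fun y => gradient u y) x₀ := by
    simp only [hgA]
    exact A.differentiableAt.comp x₀ hDd
  have hV0 : gradient u x₀ = 0 := by rw [hgA, h0, map_zero]
  have hVfd : fderiv ℝ (fun y => gradient u y) x₀ = A.comp (fderiv ℝ (fderiv ℝ u) x₀) := by
    simp only [hgA]
    exact (A.hasFDerivAt.comp x₀ hDd.hasFDerivAt).fderiv
  have hsqpos : (0:ℝ) < ε^2 + ‖gradient u x₀‖^2 := by positivity
  have hnd : DifferentiableAt ℝ (fun y => ε^2 + ‖gradient u y‖^2) x₀ := by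
    have hrw : (fun y => ε^2 + ‖gradient u y‖^2)
        = fun y => ε^2 + ⟪gradient u y, gradient u y⟫ := by
      funext y; rw [real_inner_self_eq_norm_sq]
    rw [hrw]
    exact (differentiableAt_const _).add (hVd.inner ℝ hVd)
  have hcd : DifferentiableAt ℝ (fun y => (Real.sqrt (ε^2 + ‖gradient u y‖^2))⁻¹) x₀ := by
    apply DifferentiableAt.inv
    · exact hnd.sqrt (ne_of_gt hsqpos)
    · exact (Real.sqrt_pos.mpr hsqpos).ne'
  have hsmul := fderiv_fun_smul hcd hVd
  have hsqrt : Real.sqrt (ε^2 + ‖gradient u x₀‖^2) = ε := by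
    rw [hV0]; simp [Real.sqrt_sq hε.le]
  unfold Qop vdiv
  rw [hsmul, hsqrt, hV0, hVfd]
  simp only [ContinuousLinearMap.add_apply, ContinuousLinearMap.smulRight_apply,
    ContinuousLinearMap.smul_apply, ContinuousLinearMap.coe_comp', Function.comp_apply,
    smul_zero, add_zero, hsqrt]
  have hptwise : ∀ i : Fin n,
      (ε⁻¹ • A (fderiv ℝ (fderiv ℝ u) x₀ (EuclideanSpace.single i 1))) i
      = ε⁻¹ * fderiv ℝ (fderiv ℝ u) x₀ (EuclideanSpace.single i 1)
          (EuclideanSpace.single i 1) := by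
    intro i
    rw [PiLp.smul_apply, hAcoord, smul_eq_mul]
  rw [Finset.sum_congr rfl (fun i _ => hptwise i), ← Finset.mul_sum]

lemma hess_nonneg {n : ℕ} {K : Set (EuclideanSpace ℝ (Fin n))} (hK : IsOpen K)
    {u : EuclideanSpace ℝ (Fin n) → ℝ} (hu2 : ContDiffOn ℝ 2 u K) {x₀} (hx₀ : x₀ ∈ K)
    (hmin : IsLocalMin u x₀) (i : Fin n) :
    0 ≤ fderiv ℝ (fderiv ℝ u) x₀ (EuclideanSpace.single i 1) (EuclideanSpace.single i 1) := by
  set e : EuclideanSpace ℝ (Fin n) := EuclideanSpace.single i 1 with he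
  set line : ℝ → EuclideanSpace ℝ (Fin n) := fun t => x₀ + t • e with hline_def
  have hline : ∀ t : ℝ, HasDerivAt line e t := by
    intro t
    simpa [hline_def] using ((hasDerivAt_id t).smul_const e).const_add x₀
  have hline0 : line 0 = x₀ := by simp [hline_def]
  have hWmem : {y | u x₀ ≤ u y} ∈ nhds x₀ := hmin
  have hs : line ⁻¹' (K ∩ {y | u x₀ ≤ u y}) ∈ nhds (0:ℝ) := by
    have hcont : ContinuousAt line 0 := (hline 0).continuousAt
    exact hcont.preimage_mem_nhds (by rw [hline0]; exact Filter.inter_mem (hK.mem_nhds hx₀) hWmem)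
  have hfd : ∀ t ∈ line ⁻¹' (K ∩ {y | u x₀ ≤ u y}),
      HasDerivAt (fun r => u (line r)) (fderiv ℝ u (line t) e) t := by
    intro t ht
    have hud : DifferentiableAt ℝ u (line t) :=
      (hu2.contDiffAt (hK.mem_nhds ht.1)).differentiableAt (by norm_num)
    exact hud.hasFDerivAt.comp_hasDerivAt t (hline t)
  have hDd : DifferentiableAt ℝ (fderiv ℝ u) x₀ :=
    ((hu2.contDiffAt (hK.mem_nhds hx₀)).fderiv_right
      (by norm_num : (1:WithTop ℕ∞)+1 ≤ 2)).differentiableAt one_ne_zero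
  have hcomp : HasDerivAt (fun t => fderiv ℝ u (line t)) (fderiv ℝ (fderiv ℝ u) x₀ e) 0 := by
    have h1 : HasFDerivAt (fderiv ℝ u) (fderiv ℝ (fderiv ℝ u) x₀) (line 0) := by
      rw [hline0]; exact hDd.hasFDerivAt
    exact h1.comp_hasDerivAt 0 (hline 0)
  have hg : HasDerivAt (fun t => fderiv ℝ u (line t) e)
      (fderiv ℝ (fderiv ℝ u) x₀ e e) 0 := by
    have := hcomp.clm_apply (hasDerivAt_const 0 e)
    simpa using this
  refine oneD_min hs (fun t ht => ?_) hfd hg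
  simpa [hline0] using ht.2


/-- a priori sup bound `0 ≤ u ≤ κ/(σε)` via the maximum principle. -/
theorem sup_bound_double_approximator {n : ℕ} (hn : 1 ≤ n)
    (K : Set (EuclideanSpace ℝ (Fin n))) (hK : IsOpen K) (hKc : IsCompact (closure K))
    (ε σ κ : ℝ) (hε : 0 < ε) (hσ : 0 < σ) (hκ : 0 ≤ κ)
    (u : EuclideanSpace ℝ (Fin n) → ℝ)
    (hu2 : ContDiffOn ℝ 2 u K) (huc : ContinuousOn u (closure K))
    (hsol : SolvesDirichlet ε σ κ K u) :
    ∀ x ∈ closure K, 0 ≤ u x ∧ u x ≤ κ / (σ * ε) := by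
  intro x hx
  obtain ⟨hQ, hbd⟩ := hsol
  have hne : (closure K).Nonempty := ⟨x, hx⟩
  have hfr : ∀ z ∈ closure K, z ∉ K → u z = 0 := fun z hz hz' =>
    hbd z (by rw [hK.frontier_eq]; exact ⟨hz, hz'⟩)
  have hεinv : (0:ℝ) < ε⁻¹ := inv_pos.mpr hε
  have hκσε : 0 ≤ κ / (σ * ε) := div_nonneg hκ (mul_pos hσ hε).le
  constructor
  · -- lower bound via minimum point
    obtain ⟨z, hz, hzmin⟩ := hKc.exists_isMinOn hne huc
    have hzx : u z ≤ u x := hzmin hx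
    by_cases hzK : z ∈ K
    · have hloc : IsLocalMin u z :=
        hzmin.isLocalMin (Filter.mem_of_superset (hK.mem_nhds hzK) subset_closure)
      have hg0 : fderiv ℝ u z = 0 := hloc.fderiv_eq_zero
      have heq := qop_eq hK σ κ hε hu2 hzK hg0
      have hQz := hQ z hzK
      rw [hQz] at heq
      have hsum : 0 ≤ ∑ i, fderiv ℝ (fderiv ℝ u) z (EuclideanSpace.single i 1)
          (EuclideanSpace.single i 1) :=
        Finset.sum_nonneg fun i _ => hess_nonneg hK hu2 hzK hloc i
      have hκε : 0 ≤ κ / ε := div_nonneg hκ hε.le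
      nlinarith [mul_nonneg hεinv.le hsum]
    · have h0 := hfr z hz hzK
      linarith
  · -- upper bound via maximum point
    obtain ⟨z, hz, hzmax⟩ := hKc.exists_isMaxOn hne huc
    have hxz : u x ≤ u z := hzmax hx
    by_cases hzK : z ∈ K
    · have hloc : IsLocalMax u z :=
        hzmax.isLocalMax (Filter.mem_of_superset (hK.mem_nhds hzK) subset_closure)
      have hg0 : fderiv ℝ u z = 0 := hloc.fderiv_eq_zero
      have heq := qop_eq hK σ κ hε hu2 hzK hg0
      have hQz := hQ z hzK
      rw [hQz] at heq
      have hsum : ∑ i, fderiv ℝ (fderiv ℝ u) z (EuclideanSpace.single i 1)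
          (EuclideanSpace.single i 1) ≤ 0 :=
        Finset.sum_nonpos fun i _ => hess_nonpos hK hu2 hzK hloc i
      -- σ * u z ≤ κ / ε
      have h1 : σ * u z ≤ κ / ε := by nlinarith [mul_nonpos_of_nonneg_of_nonpos hεinv.le hsum]
      have h2 : u z ≤ κ / (σ * ε) := by
        rw [le_div_iff₀ (mul_pos hσ hε)]
        have h3 : (σ * u z) * ε ≤ (κ/ε) * ε := mul_le_mul_of_nonneg_right h1 hε.le
        rw [div_mul_cancel₀ _ hε.ne'] at h3
        nlinarith
      linarith
    · have h0 := hfr z hz hzK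
      linarith
end

section
/- Monotonicity of the double approximators in σ (used in the proof of Theorem 5.1): let ε > 0, κ ≥ 0, and 0 < σ₁ ≤ σ₂. If u₁ solves the (ε,σ₁,κ)-Dirichlet problem and u₂ solves the (ε,σ₂,κ)-Dirichlet problem on K₀ (both C² on K₀ and continuous on the compact closure of K₀), then u₁(x) ≥ u₂(x) for all x in the closure of K₀. -/
open scoped BigOperators RealInnerProductSpace

section Aux

lemma second_deriv_test {g g' : ℝ → ℝ} {d : ℝ}
    (hg : ∀ᶠ t in nhds (0:ℝ), HasDerivAt g (g' t) t)
    (hg' : HasDerivAt g' d 0) (hmax : IsLocalMax g 0) : d ≤ 0 := by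
  by_contra hd
  push_neg at hd
  have h0 : g' 0 = 0 := hmax.hasDerivAt_eq_zero hg.self_of_nhds
  have hslope : Filter.Tendsto (fun t => g' t / t) (nhdsWithin 0 {(0:ℝ)}ᶜ) (nhds d) := by
    have h := hasDerivAt_iff_tendsto_slope.1 hg'
    refine h.congr ?_
    intro t
    simp [slope_def_field, h0]
  have hev : ∀ᶠ t in nhdsWithin 0 {(0:ℝ)}ᶜ, 0 < g' t / t :=
    hslope.eventually (eventually_gt_nhds hd)
  rw [eventually_nhdsWithin_iff] at hev
  obtain ⟨δ, hδ, hall⟩ := Metric.eventually_nhds_iff_ball.1 ((hg.and hmax).and hev)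
  have hballmem : ∀ t : ℝ, 0 ≤ t → t ≤ δ/2 → t ∈ Metric.ball (0:ℝ) δ := by
    intro t h1 h2
    simp only [Metric.mem_ball, Real.dist_eq, sub_zero, abs_of_nonneg h1]
    linarith
  have hmono : StrictMonoOn g (Set.Icc 0 (δ/2)) := by
    apply strictMonoOn_of_deriv_pos (convex_Icc _ _)
    · intro t ht
      exact ((hall t (hballmem t ht.1 ht.2)).1.1.continuousAt).continuousWithinAt
    · intro t ht
      rw [interior_Icc] at ht
      have hb := hall t (hballmem t ht.1.le ht.2.le)
      rw [hb.1.1.deriv]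
      have h2 := hb.2 (by simp [Set.mem_compl_iff]; exact ne_of_gt ht.1)
      have := mul_pos h2 ht.1
      rwa [div_mul_cancel₀] at this
      exact ne_of_gt ht.1
  have h01 : g 0 < g (δ/2) := by
    refine hmono (Set.left_mem_Icc.2 (by linarith)) (Set.right_mem_Icc.2 (by linarith)) (by linarith)
  have h02 : g (δ/2) ≤ g 0 := (hall (δ/2) (hballmem _ (by linarith) le_rfl)).1.2
  linarith

variable {n : ℕ}

local notation "E" => EuclideanSpace ℝ (Fin n)



lemma sum_single_eq (p : E) : ∑ i, p i • (EuclideanSpace.single i 1 : E) = p := by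
  have h := (EuclideanSpace.basisFun (Fin n) ℝ).sum_repr p
  simpa [EuclideanSpace.basisFun_apply, EuclideanSpace.basisFun_repr] using h

lemma quad_trace {p : E} {H : EuclideanSpace ℝ (Fin n) →L[ℝ] EuclideanSpace ℝ (Fin n)}
    (hsymm : ∀ v w : E, ⟪v, H w⟫ = ⟪w, H v⟫)
    (hnsd : ∀ v : E, ⟪v, H v⟫ ≤ 0) :
    ‖p‖^2 * ∑ i, ⟪(EuclideanSpace.single i 1 : E), H (EuclideanSpace.single i 1)⟫
      ≤ ⟪p, H p⟫ := by
  set e : Fin n → E := fun i => EuclideanSpace.single i 1 with he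
  set Φ : Fin n → Fin n → ℝ := fun i j => ⟪e i, H (e j)⟫ with hΦ
  set a : Fin n → ℝ := fun i => -Φ i i with ha
  have ha0 : ∀ i, 0 ≤ a i := fun i => neg_nonneg.2 (hnsd _)
  have habs : ∀ i j, |Φ i j| ≤ Real.sqrt (a i) * Real.sqrt (a j) := by
    intro i j
    have hquad : ∀ t : ℝ, 0 ≤ a j * (t * t) + (-(2 * Φ i j)) * t + a i := by
      intro t
      have h := hnsd (e i + t • e j)
      have hexp : ⟪e i + t • e j, H (e i + t • e j)⟫
          = Φ i i + t * Φ i j + t * Φ j i + t * t * Φ j j := by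
        simp only [map_add, map_smul, inner_add_left, inner_add_right,
          real_inner_smul_left, real_inner_smul_right, hΦ]
        ring
      rw [hexp] at h
      have hs : Φ j i = Φ i j := hsymm (e j) (e i)
      rw [hs] at h
      simp only [ha]
      nlinarith [h]
    have hd := discrim_le_zero hquad
    rw [discrim] at hd
    have h2 : Φ i j ^ 2 ≤ a i * a j := by nlinarith [hd]
    calc |Φ i j| = Real.sqrt (Φ i j ^ 2) := (Real.sqrt_sq_eq_abs _).symm
      _ ≤ Real.sqrt (a i * a j) := Real.sqrt_le_sqrt h2
      _ = Real.sqrt (a i) * Real.sqrt (a j) := Real.sqrt_mul (ha0 i) _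
  have hp := sum_single_eq p
  have h1 : ∀ w : E, ⟪p, H w⟫ = ∑ i, p i * ⟪e i, H w⟫ := by
    intro w
    conv_lhs => rw [← hp]
    rw [sum_inner]
    exact Finset.sum_congr rfl fun i _ => real_inner_smul_left _ _ _
  have h2 : ∀ i, ⟪e i, H p⟫ = ∑ j, p j * Φ i j := by
    intro i
    conv_lhs => rw [← hp]
    rw [map_sum, inner_sum]
    exact Finset.sum_congr rfl fun j _ => by rw [map_smul, real_inner_smul_right]
  have hip : ⟪p, H p⟫ = ∑ i, ∑ j, (p i * p j) * Φ i j := by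
    rw [h1]
    refine Finset.sum_congr rfl fun i _ => ?_
    rw [h2, Finset.mul_sum]
    exact Finset.sum_congr rfl fun j _ => by ring
  have hkey : -⟪p, H p⟫ ≤ (∑ i, |p i| * Real.sqrt (a i))^2 := by
    rw [hip, sq, Finset.sum_mul_sum, ← Finset.sum_neg_distrib]
    refine Finset.sum_le_sum fun i _ => ?_
    rw [← Finset.sum_neg_distrib]
    refine Finset.sum_le_sum fun j _ => ?_
    calc -(p i * p j * Φ i j) ≤ |p i * p j * Φ i j| := neg_le_abs _
      _ = |p i| * |p j| * |Φ i j| := by rw [abs_mul, abs_mul]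
      _ ≤ |p i| * |p j| * (Real.sqrt (a i) * Real.sqrt (a j)) := by
          apply mul_le_mul_of_nonneg_left (habs i j) (by positivity)
      _ = |p i| * Real.sqrt (a i) * (|p j| * Real.sqrt (a j)) := by ring
  have hCS : (∑ i, |p i| * Real.sqrt (a i))^2 ≤ (∑ i, |p i|^2) * (∑ i, Real.sqrt (a i)^2) :=
    Finset.sum_mul_sq_le_sq_mul_sq Finset.univ _ _
  have hnorm : (∑ i, |p i|^2) = ‖p‖^2 := by
    rw [EuclideanSpace.norm_eq, Real.sq_sqrt (by positivity)]
    simp [sq_abs, Real.norm_eq_abs]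
  have hsq : (∑ i, Real.sqrt (a i)^2) = ∑ i, a i := by
    exact Finset.sum_congr rfl fun i _ => Real.sq_sqrt (ha0 i)
  have hsum : (∑ i, a i) = -∑ i, Φ i i := by
    simp [ha]
  have : -⟪p, H p⟫ ≤ ‖p‖^2 * -∑ i, Φ i i := by
    calc -⟪p, H p⟫ ≤ (∑ i, |p i| * Real.sqrt (a i))^2 := hkey
      _ ≤ (∑ i, |p i|^2) * (∑ i, Real.sqrt (a i)^2) := hCS
      _ = ‖p‖^2 * -∑ i, Φ i i := by rw [hnorm, hsq, hsum]
  have hfin := this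
  simp only [hΦ] at hfin ⊢
  linarith


noncomputable def hess (u : E → ℝ) (x : E) : EuclideanSpace ℝ (Fin n) →L[ℝ] EuclideanSpace ℝ (Fin n) :=
  (((InnerProductSpace.toDual ℝ (EuclideanSpace ℝ (Fin n))).symm.toContinuousLinearEquiv :
      (EuclideanSpace ℝ (Fin n) →L[ℝ] ℝ) ≃L[ℝ] EuclideanSpace ℝ (Fin n)).toContinuousLinearMap).comp
    (fderiv ℝ (fderiv ℝ u) x)

lemma hess_inner (u : E → ℝ) (x : E) (v w : E) :
    ⟪hess u x v, w⟫ = fderiv ℝ (fderiv ℝ u) x v w := by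
  simp [hess, InnerProductSpace.toDual_symm_apply]

lemma hasFDerivAt_gradient {u : E → ℝ} {x : E} (hu : ContDiffAt ℝ 2 u x) :
    HasFDerivAt (gradient u) (hess u x) x := by
  have h1 : ContDiffAt ℝ 1 (fderiv ℝ u) x := hu.fderiv_right (by norm_num)
  have h2 : HasFDerivAt (fderiv ℝ u) (fderiv ℝ (fderiv ℝ u) x) x :=
    (h1.differentiableAt one_ne_zero).hasFDerivAt
  have h3 := (((InnerProductSpace.toDual ℝ (EuclideanSpace ℝ (Fin n))).symm.toContinuousLinearEquiv :
      (EuclideanSpace ℝ (Fin n) →L[ℝ] ℝ) ≃L[ℝ] EuclideanSpace ℝ (Fin n)).toContinuousLinearMap).hasFDerivAt.comp x h2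
  exact h3.congr_of_eventuallyEq (Filter.Eventually.of_forall fun y => by
    simp [gradient, Function.comp])

lemma vdiv_formula {ε : ℝ} (hε : 0 < ε) {u : E → ℝ} {x : E} (hu : ContDiffAt ℝ 2 u x) :
    vdiv (fun y => (Real.sqrt (ε ^ 2 + ‖gradient u y‖ ^ 2))⁻¹ • gradient u y) x =
      ∑ i, ((Real.sqrt (ε ^ 2 + ‖gradient u x‖ ^ 2))⁻¹ * (hess u x (EuclideanSpace.single i 1)) i
        - gradient u x i * ⟪gradient u x, hess u x (EuclideanSpace.single i 1)⟫
            / Real.sqrt (ε ^ 2 + ‖gradient u x‖ ^ 2) ^ 3) := by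
  set p : E := gradient u x with hp
  set B := hess u x with hB
  set q : E → ℝ := fun y => ε ^ 2 + ‖gradient u y‖ ^ 2 with hq
  have hq0 : 0 < q x := by positivity
  set s : ℝ := Real.sqrt (q x) with hs
  have hs0 : 0 < s := Real.sqrt_pos.2 hq0
  have hgrad : HasFDerivAt (gradient u) B x := hasFDerivAt_gradient hu
  have hqd : HasFDerivAt q ((2:ℕ) • (innerSL ℝ p).comp B) x := by
    simpa [hq] using hgrad.norm_sq.const_add (ε ^ 2)
  have hsd : HasFDerivAt (fun y => Real.sqrt (q y))
      ((1 / (2 * s)) • ((2:ℕ) • (innerSL ℝ p).comp B)) x := hqd.sqrt hq0.ne'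
  have hinv : HasFDerivAt (fun y => (Real.sqrt (q y))⁻¹)
      ((-(s ^ 2)⁻¹) • ((1 / (2 * s)) • ((2:ℕ) • (innerSL ℝ p).comp B))) x := by
    have h := (hasDerivAt_inv hs0.ne').comp_hasFDerivAt x hsd
    simpa [Function.comp_def] using h
  have hF : HasFDerivAt (fun y => (Real.sqrt (q y))⁻¹ • gradient u y)
      (s⁻¹ • B + ((-(s ^ 2)⁻¹) • ((1 / (2 * s)) • ((2:ℕ) • (innerSL ℝ p).comp B))).smulRight p)
      x := hinv.smul hgrad
  have hfd := hF.fderiv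
  rw [vdiv]
  rw [show (fun y => (Real.sqrt (ε ^ 2 + ‖gradient u y‖ ^ 2))⁻¹ • gradient u y)
      = (fun y => (Real.sqrt (q y))⁻¹ • gradient u y) from rfl]
  rw [hfd]
  refine Finset.sum_congr rfl fun i _ => ?_
  simp only [ContinuousLinearMap.add_apply, ContinuousLinearMap.smul_apply,
    ContinuousLinearMap.smulRight_apply, ContinuousLinearMap.comp_apply, innerSL_apply_apply,
    PiLp.add_apply, PiLp.smul_apply, smul_eq_mul, nsmul_eq_mul, Nat.cast_ofNat]
  rw [real_inner_comm]
  field_simp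
  ring

lemma vdiv_zero_fun {ε : ℝ} (x : E) :
    vdiv (fun y => (Real.sqrt (ε ^ 2 + ‖gradient (fun _ : E => (0:ℝ)) y‖ ^ 2))⁻¹ •
      gradient (fun _ : E => (0:ℝ)) y) x = 0 := by
  have h : (fun y => (Real.sqrt (ε ^ 2 + ‖gradient (fun _ : E => (0:ℝ)) y‖ ^ 2))⁻¹ •
      gradient (fun _ : E => (0:ℝ)) y) = fun _ : E => (0:E) := by
    funext y
    rw [gradient_fun_const]
    simp
  rw [vdiv, h]
  simp [fderiv_const]

set_option maxHeartbeats 1000000 in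
lemma key_lemma {K : Set (EuclideanSpace ℝ (Fin n))} (hK : IsOpen K) {x : E} (hx : x ∈ K)
    {ε : ℝ} (hε : 0 < ε) {u₁ u₂ : E → ℝ}
    (h₁ : ContDiffOn ℝ 2 u₁ K) (h₂ : ContDiffOn ℝ 2 u₂ K)
    (hmax : IsLocalMax (fun y => u₂ y - u₁ y) x) :
    gradient u₂ x = gradient u₁ x ∧
      vdiv (fun y => (Real.sqrt (ε ^ 2 + ‖gradient u₂ y‖ ^ 2))⁻¹ • gradient u₂ y) x ≤
      vdiv (fun y => (Real.sqrt (ε ^ 2 + ‖gradient u₁ y‖ ^ 2))⁻¹ • gradient u₁ y) x := by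
  have hKx : K ∈ nhds x := hK.mem_nhds hx
  have hc₁ : ContDiffAt ℝ 2 u₁ x := h₁.contDiffAt hKx
  have hc₂ : ContDiffAt ℝ 2 u₂ x := h₂.contDiffAt hKx
  have hd₁ : DifferentiableAt ℝ u₁ x := hc₁.differentiableAt two_ne_zero
  have hd₂ : DifferentiableAt ℝ u₂ x := hc₂.differentiableAt two_ne_zero
  -- first-order condition
  have hfeq : fderiv ℝ u₂ x = fderiv ℝ u₁ x := by
    have h0 : fderiv ℝ (fun y => u₂ y - u₁ y) x = 0 := hmax.fderiv_eq_zero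
    rw [fderiv_fun_sub hd₂ hd₁] at h0
    exact sub_eq_zero.1 h0
  have hgeq : gradient u₂ x = gradient u₁ x := by
    simp only [gradient, hfeq]
  refine ⟨hgeq, ?_⟩
  -- Hessian difference
  set B₁ := hess u₁ x with hB₁
  set B₂ := hess u₂ x with hB₂
  set H : EuclideanSpace ℝ (Fin n) →L[ℝ] EuclideanSpace ℝ (Fin n) := B₂ - B₁ with hH
  have hΦ : ∀ v w : E, ⟪v, H w⟫ =
      fderiv ℝ (fderiv ℝ u₂) x w v - fderiv ℝ (fderiv ℝ u₁) x w v := by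
    intro v w
    rw [real_inner_comm]
    have : H w = B₂ w - B₁ w := rfl
    rw [this, inner_sub_left, hess_inner, hess_inner]
  have hsymm : ∀ v w : E, ⟪v, H w⟫ = ⟪w, H v⟫ := by
    intro v w
    rw [hΦ, hΦ]
    rw [(hc₂.isSymmSndFDerivAt (by norm_num)).eq w v,
      (hc₁.isSymmSndFDerivAt (by norm_num)).eq w v]
  -- second-order condition
  have hnsd : ∀ v : E, ⟪v, H v⟫ ≤ 0 := by
    intro v
    have hline : ∀ t : ℝ, HasDerivAt (fun r : ℝ => x + r • v) v t := by
      intro t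
      simpa using ((hasDerivAt_id t).smul_const v).const_add x
    have hmem : ∀ᶠ t in nhds (0:ℝ), x + t • v ∈ K := by
      have hcont : Filter.Tendsto (fun t : ℝ => x + t • v) (nhds 0) (nhds x) := by
        have := ((hline 0).continuousAt)
        simpa using this.tendsto
      exact hcont.eventually (hK.eventually_mem hx)
    set g : ℝ → ℝ := fun t => u₂ (x + t • v) - u₁ (x + t • v) with hg
    set g' : ℝ → ℝ := fun t => fderiv ℝ u₂ (x + t • v) v - fderiv ℝ u₁ (x + t • v) v with hg'
    have hgd : ∀ᶠ t in nhds (0:ℝ), HasDerivAt g (g' t) t := by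
      filter_upwards [hmem] with t ht
      have hda : ∀ u : E → ℝ, ContDiffOn ℝ 2 u K →
          HasDerivAt (fun r => u (x + r • v)) (fderiv ℝ u (x + t • v) v) t := by
        intro u hu
        have hdu : DifferentiableAt ℝ u (x + t • v) :=
          (hu.contDiffAt (hK.mem_nhds ht)).differentiableAt two_ne_zero
        exact hdu.hasFDerivAt.comp_hasDerivAt t (hline t)
      exact (hda u₂ h₂).sub (hda u₁ h₁)
    have hg'd : HasDerivAt g' (⟪v, H v⟫) 0 := by
      have hda : ∀ u : E → ℝ, ContDiffAt ℝ 2 u x →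
          HasDerivAt (fun t : ℝ => fderiv ℝ u (x + t • v) v)
            (fderiv ℝ (fderiv ℝ u) x v v) 0 := by
        intro u hu
        have h1 : ContDiffAt ℝ 1 (fderiv ℝ u) x := hu.fderiv_right (by norm_num)
        have h2 : HasFDerivAt (fderiv ℝ u) (fderiv ℝ (fderiv ℝ u) x) x :=
          (h1.differentiableAt one_ne_zero).hasFDerivAt
        have h2' : HasFDerivAt (fderiv ℝ u) (fderiv ℝ (fderiv ℝ u) x) (x + (0:ℝ) • v) := by
          simpa using h2
        have h3 : HasDerivAt (fun t : ℝ => fderiv ℝ u (x + t • v))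
            (fderiv ℝ (fderiv ℝ u) x v) 0 := by
          simpa [Function.comp_def] using h2'.comp_hasDerivAt 0 (hline 0)
        have h4 := h3.clm_apply (hasDerivAt_const (0:ℝ) v)
        simpa using h4
      have := (hda u₂ hc₂).sub (hda u₁ hc₁)
      rw [hΦ v v]
      exact this
    have hmaxg : IsLocalMax g 0 := by
      have hcont : Filter.Tendsto (fun t : ℝ => x + t • v) (nhds 0) (nhds x) := by
        have := ((hline 0).continuousAt)
        simpa using this.tendsto
      have h0 : g 0 = u₂ x - u₁ x := by simp [hg]
      unfold IsLocalMax IsMaxFilter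
      filter_upwards [hcont.eventually hmax] with t ht
      rw [h0]
      exact ht
    exact second_deriv_test hgd hg'd hmaxg
  -- trace bound
  set p : E := gradient u₁ x with hp
  have htr : (∑ i, ⟪(EuclideanSpace.single i 1 : E), H (EuclideanSpace.single i 1)⟫) ≤ 0 :=
    Finset.sum_nonpos fun i _ => hnsd _
  have hquad := quad_trace hsymm hnsd (p := p)
  -- rewrite both divergences
  rw [vdiv_formula hε hc₁, vdiv_formula hε hc₂, hgeq, ← hp]
  set s : ℝ := Real.sqrt (ε ^ 2 + ‖p‖ ^ 2) with hs
  have hs0 : 0 < s := Real.sqrt_pos.2 (by positivity)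
  have hs2 : s ^ 2 = ε ^ 2 + ‖p‖ ^ 2 := Real.sq_sqrt (by positivity)
  rw [← sub_nonpos, ← Finset.sum_sub_distrib]
  have hterm : ∀ i : Fin n,
      (s⁻¹ * (B₂ (EuclideanSpace.single i 1)) i
        - p i * ⟪p, B₂ (EuclideanSpace.single i 1)⟫ / s ^ 3)
      - (s⁻¹ * (B₁ (EuclideanSpace.single i 1)) i
        - p i * ⟪p, B₁ (EuclideanSpace.single i 1)⟫ / s ^ 3)
      = s⁻¹ * ⟪(EuclideanSpace.single i 1 : E), H (EuclideanSpace.single i 1)⟫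
        - p i * ⟪p, H (EuclideanSpace.single i 1)⟫ / s ^ 3 := by
    intro i
    have h1 : H (EuclideanSpace.single i 1) =
        B₂ (EuclideanSpace.single i 1) - B₁ (EuclideanSpace.single i 1) := rfl
    have h2 : ⟪(EuclideanSpace.single i 1 : E), H (EuclideanSpace.single i 1)⟫
        = (H (EuclideanSpace.single i 1)) i := by
      rw [EuclideanSpace.inner_single_left]
      simp
    rw [h2, h1, inner_sub_right]
    simp only [PiLp.sub_apply]
    ring
  rw [Finset.sum_congr rfl fun i _ => hterm i]
  rw [Finset.sum_sub_distrib, ← Finset.mul_sum]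
  have hsum2 : (∑ i, p i * ⟪p, H (EuclideanSpace.single i 1)⟫ / s ^ 3)
      = ⟪p, H p⟫ / s ^ 3 := by
    rw [← Finset.sum_div]
    congr 1
    have hp' := sum_single_eq p
    calc (∑ i, p i * ⟪p, H (EuclideanSpace.single i 1)⟫)
        = ∑ i, ⟪p, H (p i • (EuclideanSpace.single i 1 : E))⟫ := by
          refine Finset.sum_congr rfl fun i _ => ?_
          rw [map_smul, real_inner_smul_right]
      _ = ⟪p, H (∑ i, p i • (EuclideanSpace.single i 1 : E))⟫ := by
          rw [map_sum, inner_sum]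
      _ = ⟪p, H p⟫ := by rw [hp']
  rw [hsum2]
  set T : ℝ := ∑ i, ⟪(EuclideanSpace.single i 1 : E), H (EuclideanSpace.single i 1)⟫ with hT
  have h1 : s ^ 2 * T ≤ ⟪p, H p⟫ := by nlinarith [hquad, htr, sq_nonneg ε]
  have h3 : s⁻¹ * T - ⟪p, H p⟫ / s ^ 3 = (s ^ 2 * T - ⟪p, H p⟫) / s ^ 3 := by
    field_simp
  rw [h3]
  apply div_nonpos_of_nonpos_of_nonneg
  · linarith
  · positivity

end Aux

/-- monotonicity of the double approximators in `σ`. -/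
theorem monotonicity_in_sigma {n : ℕ} (hn : 1 ≤ n)
    (K : Set (EuclideanSpace ℝ (Fin n))) (hK : IsOpen K) (hKc : IsCompact (closure K))
    (ε κ σ₁ σ₂ : ℝ) (hε : 0 < ε) (hκ : 0 ≤ κ) (hσ₁ : 0 < σ₁) (hσ : σ₁ ≤ σ₂)
    (u₁ u₂ : EuclideanSpace ℝ (Fin n) → ℝ)
    (hu₁2 : ContDiffOn ℝ 2 u₁ K) (hu₁c : ContinuousOn u₁ (closure K))
    (hu₂2 : ContDiffOn ℝ 2 u₂ K) (hu₂c : ContinuousOn u₂ (closure K))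
    (hsol₁ : SolvesDirichlet ε σ₁ κ K u₁) (hsol₂ : SolvesDirichlet ε σ₂ κ K u₂) :
    ∀ x ∈ closure K, u₂ x ≤ u₁ x := by
  have hcl : ∀ y ∈ closure K, y ∈ K ∨ y ∈ frontier K := by
    intro y hy
    by_cases h : y ∈ K
    · exact Or.inl h
    · exact Or.inr (by rw [hK.frontier_eq]; exact ⟨hy, h⟩)
  -- Step 1: u₁ is nonnegative on the closure
  have hupos : ∀ x ∈ closure K, 0 ≤ u₁ x := by
    by_contra hcon
    push_neg at hcon
    obtain ⟨z, hz, hzneg⟩ := hcon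
    obtain ⟨x₀, hx₀, hmin⟩ := hKc.exists_isMinOn ⟨z, hz⟩ hu₁c
    have hneg : u₁ x₀ < 0 := lt_of_le_of_lt (hmin hz) hzneg
    have hx₀K : x₀ ∈ K := by
      rcases hcl x₀ hx₀ with h | h
      · exact h
      · exact absurd (hsol₁.2 x₀ h) (by intro h0; rw [h0] at hneg; exact lt_irrefl 0 hneg)
    have hmaxon : IsMaxOn (fun y => (fun _ : EuclideanSpace ℝ (Fin n) => (0:ℝ)) y - u₁ y)
        (closure K) x₀ := by
      intro y hy
      have h := hmin hy
      simp only [Set.mem_setOf_eq] at h ⊢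
      linarith
    have hloc : IsLocalMax (fun y => (fun _ : EuclideanSpace ℝ (Fin n) => (0:ℝ)) y - u₁ y) x₀ :=
      hmaxon.isLocalMax (Filter.mem_of_superset (hK.mem_nhds hx₀K) subset_closure)
    obtain ⟨hgr, hle⟩ := key_lemma hK hx₀K hε hu₁2 contDiffOn_const hloc
    rw [vdiv_zero_fun] at hle
    have heq := hsol₁.1 x₀ hx₀K
    rw [Qop] at heq
    have hκs : 0 ≤ κ / Real.sqrt (ε ^ 2 + ‖gradient u₁ x₀‖ ^ 2) :=
      div_nonneg hκ (Real.sqrt_nonneg _)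
    nlinarith [heq, hle, hκs, mul_neg_of_pos_of_neg hσ₁ hneg]
  -- Step 2: comparison
  intro x hx
  by_contra hcon
  push_neg at hcon
  obtain ⟨x₀, hx₀, hmax⟩ := hKc.exists_isMaxOn ⟨x, hx⟩ (hu₂c.sub hu₁c)
  have hgt : 0 < u₂ x₀ - u₁ x₀ := by
    have h := hmax hx
    simp only [Set.mem_setOf_eq, Pi.sub_apply] at h
    linarith
  have hx₀K : x₀ ∈ K := by
    rcases hcl x₀ hx₀ with h | h
    · exact h
    · exfalso
      have h1 := hsol₁.2 x₀ h
      have h2 := hsol₂.2 x₀ h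
      rw [h1, h2] at hgt
      simp at hgt
  have hloc : IsLocalMax (fun y => u₂ y - u₁ y) x₀ :=
    hmax.isLocalMax (Filter.mem_of_superset (hK.mem_nhds hx₀K) subset_closure)
  obtain ⟨hgr, hle⟩ := key_lemma hK hx₀K hε hu₁2 hu₂2 hloc
  have h1 := hsol₁.1 x₀ hx₀K
  have h2 := hsol₂.1 x₀ hx₀K
  rw [Qop] at h1 h2
  rw [hgr] at h2
  have hu1nn : 0 ≤ u₁ x₀ := hupos x₀ hx₀
  have hu2pos : 0 < u₂ x₀ := by linarith
  nlinarith [h1, h2, hle, mul_le_mul_of_nonneg_right hσ (le_of_lt hu2pos),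
    mul_lt_mul_of_pos_left (show u₁ x₀ < u₂ x₀ by linarith) hσ₁]
end

section
/- Supersolution obtained by bending the smooth arrival time to infinity (key computation of Lemma 3.3, Euclidean-ambient case): let U ⊆ ℝⁿ be open and let u₀ be a C² function on U satisfying, for some constant C₀ ≥ 1: 1/C₀ ≤ |Du₀| ≤ C₀, |D²u₀| ≤ C₀, and the smooth level set flow equation div(Du₀/|Du₀|) + 1/|Du₀| = 0 on U. Then there exists T > 0 depending only on C₀ such that for every ε ∈ (0,1] and σ > 0, the function v = 1/(T − u₀) − 1/T satisfies the supersolution inequality div(Dv/√(ε² + |Dv|²)) + 1/√(ε² + |Dv|²) ≤ σv on U ∩ {0 ≤ u₀ < T}. -/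
open scoped BigOperators RealInnerProductSpace

set_option maxHeartbeats 1600000

lemma sum_apply_single {n : ℕ} (L : EuclideanSpace ℝ (Fin n) →L[ℝ] ℝ) (w : EuclideanSpace ℝ (Fin n)) :
    ∑ i, L (EuclideanSpace.single i 1) * w i = L w := by
  have hw : w = ∑ i, w i • EuclideanSpace.single i 1 := by
    ext j
    have : (∑ i, w i • EuclideanSpace.single i 1 : EuclideanSpace ℝ (Fin n)) j
        = ∑ i, (w i • (EuclideanSpace.single i 1 : EuclideanSpace ℝ (Fin n))) j :=
      by rw [WithLp.ofLp_sum, Finset.sum_apply]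
    rw [this]
    simp [EuclideanSpace.single_apply]
  conv_rhs => rw [hw]
  rw [map_sum]
  simp [mul_comm]

lemma vdiv_sqrt_smul {n : ℕ} {G : EuclideanSpace ℝ (Fin n) → EuclideanSpace ℝ (Fin n)}
    {G' : EuclideanSpace ℝ (Fin n) →L[ℝ] EuclideanSpace ℝ (Fin n)}
    {x : EuclideanSpace ℝ (Fin n)} (hG : HasFDerivAt G G' x) (e : ℝ)
    (he : 0 < e + ‖G x‖ ^ 2) :
    vdiv (fun y => (Real.sqrt (e + ‖G y‖ ^ 2))⁻¹ • G y) x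
      = -(⟪G x, G' (G x)⟫ / (Real.sqrt (e + ‖G x‖ ^ 2)) ^ 3)
        + (∑ i, (G' (EuclideanSpace.single i 1)) i) / Real.sqrt (e + ‖G x‖ ^ 2) := by
  set g : ℝ := Real.sqrt (e + ‖G x‖ ^ 2) with hgdef
  have hg0 : 0 < g := Real.sqrt_pos.mpr he
  have hg2 : g ^ 2 = e + ‖G x‖ ^ 2 := Real.sq_sqrt he.le
  have hr : HasFDerivAt (fun y => e + ⟪G y, G y⟫)
      ((fderivInnerCLM ℝ (G x, G x)).comp (G'.prod G')) x :=
    (hG.inner ℝ hG).const_add e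
  have ht0 : e + ⟪G x, G x⟫ = e + ‖G x‖ ^ 2 := by rw [real_inner_self_eq_norm_sq]
  have hsq : HasDerivAt (fun t => (Real.sqrt t)⁻¹)
      (-(1 / (2 * g)) / g ^ 2) (e + ⟪G x, G x⟫) := by
    rw [ht0]
    exact (Real.hasDerivAt_sqrt (ne_of_gt he)).inv (by rw [← hgdef]; exact ne_of_gt hg0)
  have hc : HasFDerivAt (fun y => (Real.sqrt (e + ⟪G y, G y⟫))⁻¹)
      ((-(1 / (2 * g)) / g ^ 2) • ((fderivInnerCLM ℝ (G x, G x)).comp (G'.prod G'))) x :=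
    hsq.comp_hasFDerivAt (f := fun y => e + ⟪G y, G y⟫) x hr
  have hfun : (fun y => (Real.sqrt (e + ‖G y‖ ^ 2))⁻¹ • G y)
      = fun y => (Real.sqrt (e + ⟪G y, G y⟫))⁻¹ • G y := by
    funext y; rw [real_inner_self_eq_norm_sq]
  set D := (-(1 / (2 * g)) / g ^ 2) • ((fderivInnerCLM ℝ (G x, G x)).comp (G'.prod G')) with hD
  have hF : HasFDerivAt (fun y => (Real.sqrt (e + ⟪G y, G y⟫))⁻¹ • G y)
      ((Real.sqrt (e + ⟪G x, G x⟫))⁻¹ • G' + D.smulRight (G x)) x := hc.smul hG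
  have hDapp : ∀ w, D w = -(⟪G x, G' w⟫ / g ^ 3) := by
    intro w
    have : (fderivInnerCLM ℝ ((G x, G x)) ((G'.prod G') w)) = 2 * ⟪G x, G' w⟫ := by
      simp only [fderivInnerCLM_apply, ContinuousLinearMap.prod_apply]
      rw [real_inner_comm (G' w) (G x)]
      ring
    rw [hD]
    simp only [ContinuousLinearMap.smul_apply, ContinuousLinearMap.comp_apply, this]
    field_simp
    rw [smul_eq_mul]
    have h3 : g^3 * (g^3)⁻¹ = 1 := mul_inv_cancel₀ (pow_ne_zero 3 hg0.ne')
    linear_combination (-⟪G x, G' w⟫) * h3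
  rw [hfun]
  rw [vdiv, hF.fderiv]
  have hcx : (Real.sqrt (e + ⟪G x, G x⟫))⁻¹ = g⁻¹ := by rw [ht0, hgdef]
  have : ∀ i, ((Real.sqrt (e + ⟪G x, G x⟫))⁻¹ • G' + D.smulRight (G x))
      (EuclideanSpace.single i 1) i
      = g⁻¹ * (G' (EuclideanSpace.single i 1)) i
        + D (EuclideanSpace.single i 1) * (G x) i := by
    intro i
    rw [hcx]
    simp [ContinuousLinearMap.add_apply, ContinuousLinearMap.smulRight_apply]
  rw [Finset.sum_congr rfl fun i _ => this i, Finset.sum_add_distrib]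
  rw [sum_apply_single D (G x), hDapp (G x)]
  rw [← Finset.mul_sum]
  ring

lemma final_key (C₀ τ a q ε : ℝ) (hC₀ : 1 ≤ C₀) (hτ0 : 0 < τ) (hτT : τ ≤ (2*C₀^2)⁻¹)
    (ha1 : C₀⁻¹ ≤ a) (ha2 : a ≤ C₀) (hq : q ≤ C₀ * a^2) (hε : 0 < ε) (hε1 : ε ≤ 1) :
    ε^2*(2*τ^3*a^4 + τ^4*q) + (τ^2 - 1)*(ε^2*τ^4 + a^2)*a^2 ≤ 0 := by
  have hC0 : (0:ℝ) < C₀ := lt_of_lt_of_le one_pos hC₀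
  have ha0 : 0 < a := lt_of_lt_of_le (by positivity) ha1
  have hca : 1 ≤ C₀ * a := by
    have := mul_le_mul_of_nonneg_left ha1 hC0.le
    rwa [mul_inv_cancel₀ hC0.ne'] at this
  have haa : 1 ≤ a^2 * C₀^2 := by nlinarith
  have h2c : 2*C₀^2*τ ≤ 1 := by
    have h := mul_le_mul_of_nonneg_left hτT (by positivity : (0:ℝ) ≤ 2*C₀^2)
    rwa [mul_inv_cancel₀ (by positivity : (2*C₀^2) ≠ 0)] at h
  have hτh : τ ≤ 1/2 := by
    nlinarith [mul_nonneg (by nlinarith : (0:ℝ) ≤ C₀^2 - 1) hτ0.le]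
  have hε2 : ε^2 ≤ 1 := by nlinarith
  have hq2 : ε^2*q ≤ C₀*a^2 := by
    rcases le_or_gt 0 q with h | h
    · nlinarith
    · nlinarith
  have h1 : ε^2*(τ^4*q) ≤ τ^4*(C₀*a^2) := by
    nlinarith [mul_le_mul_of_nonneg_left hq2 (pow_nonneg hτ0.le 4)]
  have h2 : ε^2*(2*τ^3*a^4) ≤ 2*τ^3*a^4 :=
    mul_le_of_le_one_left (by positivity) hε2
  have h3 : (τ^2-1)*(ε^2*τ^4+a^2)*a^2 ≤ -(3/4)*a^4 := by
    have ht2 : τ^2 - 1 ≤ -(3/4) := by nlinarith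
    have hA : (τ^2-1)*(ε^2*τ^4+a^2) ≤ (τ^2-1)*a^2 := by
      nlinarith [mul_nonneg (sq_nonneg ε) (pow_nonneg hτ0.le 4)]
    have hB : (τ^2-1)*a^2 ≤ -(3/4)*a^2 := mul_le_mul_of_nonneg_right ht2 (sq_nonneg a)
    nlinarith [mul_le_mul_of_nonneg_right (hA.trans hB) (sq_nonneg a)]
  have hc4 : (2*C₀^2*τ)^4 ≤ 1 := pow_le_one₀ (by positivity) h2c
  have hC8 : 16*C₀^8*τ^4 ≤ 1 := by nlinarith [hc4]
  have h16 : 16*C₀*τ^4 ≤ a^2 := by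
    have h5' : (1:ℝ) ≤ a^2*C₀^7 := by nlinarith [one_le_pow₀ hC₀ (n := 5), pow_pos hC0 5]
    have : (16*C₀*τ^4)*C₀^7 ≤ a^2*C₀^7 := by nlinarith
    exact le_of_mul_le_mul_right this (pow_pos hC0 7)
  have h4 : τ^4*(C₀*a^2) ≤ (1/16)*a^4 := by
    nlinarith [mul_le_mul_of_nonneg_right h16 (sq_nonneg a)]
  have h5 : 2*τ^3*a^4 ≤ (1/4)*a^4 := by
    nlinarith [pow_nonneg ha0.le 4, pow_le_pow_left₀ hτ0.le hτh 3]
  nlinarith [h1, h2, h3, h4, h5]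

lemma final_ineq (C₀ τ a q ε σ vx : ℝ) (hC₀ : 1 ≤ C₀) (hτ0 : 0 < τ) (hτT : τ ≤ (2*C₀^2)⁻¹)
    (ha1 : C₀⁻¹ ≤ a) (ha2 : a ≤ C₀) (hq : q ≤ C₀ * a^2) (hε : 0 < ε) (hε1 : ε ≤ 1)
    (hσ : 0 < σ) (hvx : 0 ≤ vx) :
    -(((τ^2)⁻¹^3*q + (τ^2)⁻¹^2*(2/τ^3)*a^4) / (Real.sqrt (ε^2 + ((τ^2)⁻¹)^2*a^2))^3)
      + ((τ^2)⁻¹*(q/a^2 - 1) + (2/τ^3)*a^2)/Real.sqrt (ε^2 + ((τ^2)⁻¹)^2*a^2)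
      + 1/Real.sqrt (ε^2 + ((τ^2)⁻¹)^2*a^2) - σ*vx ≤ 0 := by
  have hC0 : (0:ℝ) < C₀ := lt_of_lt_of_le one_pos hC₀
  have ha0 : 0 < a := lt_of_lt_of_le (by positivity) ha1
  set g : ℝ := Real.sqrt (ε^2 + ((τ^2)⁻¹)^2*a^2) with hgdef
  have hS : (0:ℝ) < ε^2 + ((τ^2)⁻¹)^2*a^2 := by positivity
  have hg0 : 0 < g := Real.sqrt_pos.mpr hS
  have hg2 : g^2 = ε^2 + ((τ^2)⁻¹)^2*a^2 := Real.sq_sqrt hS.le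
  have hσv : 0 ≤ σ * vx := mul_nonneg hσ.le hvx
  have main : -(((τ^2)⁻¹^3*q + (τ^2)⁻¹^2*(2/τ^3)*a^4) / g^3)
      + ((τ^2)⁻¹*(q/a^2 - 1) + (2/τ^3)*a^2)/g + 1/g ≤ 0 := by
    have hexp : -(((τ^2)⁻¹^3*q + (τ^2)⁻¹^2*(2/τ^3)*a^4) / g^3)
        + ((τ^2)⁻¹*(q/a^2 - 1) + (2/τ^3)*a^2)/g + 1/g
        = (ε^2*(2*τ^3*a^4 + τ^4*q) + (τ^2 - 1)*(ε^2*τ^4 + a^2)*a^2) / (τ^6 * (a^2 * g^3)) := by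
      rw [show g^3 = g * g^2 by ring, hg2]
      field_simp
      ring
    rw [hexp]
    apply div_nonpos_of_nonpos_of_nonneg
    · exact final_key C₀ τ a q ε hC₀ hτ0 hτT ha1 ha2 hq hε hε1
    · positivity
  linarith

/-- bending the smooth arrival time to infinity gives a supersolution
(key computation of Lemma 3.3, Euclidean-ambient case). The supersolution inequality
`div(Dv/√(ε²+|Dv|²)) + 1/√(ε²+|Dv|²) ≤ σ v` is written as `Qop ε σ 1 v x ≤ 0`. -/
theorem bending_supersolution (C₀ : ℝ) (hC₀ : 1 ≤ C₀) :
    ∃ T : ℝ, 0 < T ∧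
      ∀ (n : ℕ) (U : Set (EuclideanSpace ℝ (Fin n))) (u₀ : EuclideanSpace ℝ (Fin n) → ℝ)
        (ε σ : ℝ), IsOpen U → ContDiffOn ℝ 2 u₀ U →
        (∀ x ∈ U, C₀⁻¹ ≤ ‖gradient u₀ x‖) → (∀ x ∈ U, ‖gradient u₀ x‖ ≤ C₀) →
        (∀ x ∈ U, ‖fderiv ℝ (gradient u₀) x‖ ≤ C₀) →
        (∀ x ∈ U, vdiv (fun y => ‖gradient u₀ y‖⁻¹ • gradient u₀ y) x + ‖gradient u₀ x‖⁻¹ = 0) →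
        0 < ε → ε ≤ 1 → 0 < σ →
        ∀ x ∈ U ∩ {y | 0 ≤ u₀ y ∧ u₀ y < T},
          Qop ε σ 1 (fun y => (T - u₀ y)⁻¹ - T⁻¹) x ≤ 0 := by
  have hC0 : (0:ℝ) < C₀ := lt_of_lt_of_le one_pos hC₀
  refine ⟨(2*C₀^2)⁻¹, by positivity, ?_⟩
  intro n U u₀ ε σ hU hu₀ hlow hup hhess heq hε hε1 hσ x hx
  obtain ⟨hxU, hx0, hxT⟩ := hx
  set T : ℝ := (2*C₀^2)⁻¹ with hTdef
  have hT0 : 0 < T := by positivity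
  set τ : ℝ := T - u₀ x with hτdef
  have hτ0 : 0 < τ := sub_pos.mpr hxT
  have hτT : τ ≤ T := by rw [hτdef]; linarith
  -- regularity at x
  have hUx : U ∈ nhds x := hU.mem_nhds hxU
  have hd2 : ContDiffAt ℝ 2 u₀ x := hu₀.contDiffAt hUx
  have hd1' : ContDiffAt ℝ 1 (fderiv ℝ u₀) x := hd2.fderiv_right (by norm_num)
  have hpd : DifferentiableAt ℝ (gradient u₀) x := by
    have h1 : DifferentiableAt ℝ (fderiv ℝ u₀) x := hd1'.differentiableAt one_ne_zero
    exact ((InnerProductSpace.toDual ℝ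
      (EuclideanSpace ℝ (Fin n))).symm.toContinuousLinearEquiv.differentiableAt).comp x h1
  set H := fderiv ℝ (gradient u₀) x with hHdef
  have hH : HasFDerivAt (gradient u₀) H x := hpd.hasFDerivAt
  set L := fderiv ℝ u₀ x with hLdef
  have hu0d : HasFDerivAt u₀ L x := (hd2.differentiableAt (by norm_num)).hasFDerivAt
  have hinner : ∀ w, ⟪gradient u₀ x, w⟫ = L w := fun w =>
    InnerProductSpace.toDual_symm_apply
  set a : ℝ := ‖gradient u₀ x‖ with hadef
  have ha1 : C₀⁻¹ ≤ a := hlow x hxU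
  have ha2 : a ≤ C₀ := hup x hxU
  have ha0 : 0 < a := lt_of_lt_of_le (by positivity) ha1
  have hLp : L (gradient u₀ x) = a^2 := by
    rw [← hinner]; exact real_inner_self_eq_norm_sq _
  set q : ℝ := ⟪gradient u₀ x, H (gradient u₀ x)⟫ with hqdef
  have hq : q ≤ C₀ * a^2 := by
    calc q ≤ ‖gradient u₀ x‖ * ‖H (gradient u₀ x)‖ := real_inner_le_norm _ _
    _ ≤ a * (C₀ * a) := by
        apply mul_le_mul_of_nonneg_left _ (norm_nonneg _)
        calc ‖H (gradient u₀ x)‖ ≤ ‖H‖ * a := H.le_opNorm _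
        _ ≤ C₀ * a := mul_le_mul_of_nonneg_right (hhess x hxU) ha0.le
    _ = C₀ * a^2 := by ring
  set tr : ℝ := ∑ i, (H (EuclideanSpace.single i 1)) i with htrdef
  -- extract trace identity from the smooth flow equation
  have htr : tr = q / a^2 - 1 := by
    have heqx := heq x hxU
    have hfun0 : (fun y => ‖gradient u₀ y‖⁻¹ • gradient u₀ y)
        = fun y => (Real.sqrt ((0:ℝ) + ‖gradient u₀ y‖^2))⁻¹ • gradient u₀ y := by
      funext y; rw [zero_add, Real.sqrt_sq (norm_nonneg _)]
    rw [hfun0, vdiv_sqrt_smul hH 0 (by rw [zero_add]; positivity)] at heqx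
    rw [zero_add, Real.sqrt_sq (norm_nonneg _)] at heqx
    rw [← hadef, ← hqdef, ← htrdef] at heqx
    field_simp at heqx ⊢
    have h2 : a^2*(tr*a^2 - (q - a^2)) = 0 := by linear_combination a^2 * heqx
    have h3 := (mul_eq_zero.mp h2).resolve_left (by positivity : (a:ℝ)^2 ≠ 0)
    linear_combination heqx
  -- derivative of the bending factor
  have hβ : HasFDerivAt (fun y => ((T - u₀ y)^2)⁻¹) ((2/τ^3) • L) x := by
    have h0 : HasDerivAt (fun s : ℝ => T - s) (-1) (u₀ x) := (hasDerivAt_id (u₀ x)).const_sub T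
    have h2 : HasDerivAt (fun s : ℝ => (T - s)^2) ((2:ℕ) * (T - u₀ x)^1 * (-1)) (u₀ x) := h0.pow 2
    have h3 := h2.inv (pow_ne_zero 2 hτ0.ne')
    have h4 : -((2:ℕ) * (T - u₀ x)^1 * (-1)) / ((T - u₀ x)^2)^2 = 2/τ^3 := by
      rw [← hτdef]
      field_simp
      ring
    rw [h4] at h3
    exact h3.comp_hasFDerivAt x hu0d
  set G' := (τ^2)⁻¹ • H + ((2/τ^3) • L).smulRight (gradient u₀ x) with hG'def
  have hG : HasFDerivAt (fun y => ((T - u₀ y)^2)⁻¹ • gradient u₀ y) G' x := by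
    have h := hβ.smul hH
    exact h
  -- gradient of v on the open set W
  have hW : IsOpen (U ∩ u₀ ⁻¹' (Set.Iio T)) :=
    hu₀.continuousOn.isOpen_inter_preimage hU isOpen_Iio
  have hxW : x ∈ U ∩ u₀ ⁻¹' (Set.Iio T) := ⟨hxU, hxT⟩
  have hgv : ∀ y ∈ U ∩ u₀ ⁻¹' (Set.Iio T),
      gradient (fun z => (T - u₀ z)⁻¹ - T⁻¹) y = ((T - u₀ y)^2)⁻¹ • gradient u₀ y := by
    intro y hy
    obtain ⟨hyU, hyT⟩ := hy
    have hyT' : u₀ y < T := hyT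
    have hty : 0 < T - u₀ y := sub_pos.mpr hyT'
    have hdy : DifferentiableAt ℝ u₀ y :=
      (hu₀.contDiffAt (hU.mem_nhds hyU)).differentiableAt (by norm_num)
    have h1 : HasDerivAt (fun s : ℝ => (T - s)⁻¹ - T⁻¹) (((T - u₀ y)^2)⁻¹) (u₀ y) := by
      have h0 : HasDerivAt (fun s : ℝ => T - s) (-1) (u₀ y) := (hasDerivAt_id _).const_sub T
      have h2 := (h0.inv hty.ne').sub_const T⁻¹
      rw [show ((T - u₀ y)^2)⁻¹ = - -1 / (T - u₀ y)^2 by ring]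
      exact h2
    have h5 : HasFDerivAt (fun z => (T - u₀ z)⁻¹ - T⁻¹) (((T - u₀ y)^2)⁻¹ • fderiv ℝ u₀ y) y :=
      h1.comp_hasFDerivAt y hdy.hasFDerivAt
    have h6 : gradient (fun z => (T - u₀ z)⁻¹ - T⁻¹) y
        = (InnerProductSpace.toDual ℝ (EuclideanSpace ℝ (Fin n))).symm
            (((T - u₀ y)^2)⁻¹ • fderiv ℝ u₀ y) := by
      rw [show gradient (fun z => (T - u₀ z)⁻¹ - T⁻¹) y
          = (InnerProductSpace.toDual ℝ (EuclideanSpace ℝ (Fin n))).symm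
              (fderiv ℝ (fun z => (T - u₀ z)⁻¹ - T⁻¹) y) from rfl, h5.fderiv]
    rw [h6, map_smul]
    rfl
  -- replace gradient v by explicit formula in the divergence
  have hFeq : (fun y => (Real.sqrt (ε^2 + ‖gradient (fun z => (T - u₀ z)⁻¹ - T⁻¹) y‖^2))⁻¹
        • gradient (fun z => (T - u₀ z)⁻¹ - T⁻¹) y)
      =ᶠ[nhds x] (fun y => (Real.sqrt (ε^2 + ‖((T - u₀ y)^2)⁻¹ • gradient u₀ y‖^2))⁻¹
        • (((T - u₀ y)^2)⁻¹ • gradient u₀ y)) := by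
    filter_upwards [hW.mem_nhds hxW] with y hy
    rw [hgv y hy]
  have hvdeq : vdiv (fun y => (Real.sqrt (ε^2 + ‖gradient (fun z => (T - u₀ z)⁻¹ - T⁻¹) y‖^2))⁻¹
        • gradient (fun z => (T - u₀ z)⁻¹ - T⁻¹) y) x
      = vdiv (fun y => (Real.sqrt (ε^2 + ‖((T - u₀ y)^2)⁻¹ • gradient u₀ y‖^2))⁻¹
        • (((T - u₀ y)^2)⁻¹ • gradient u₀ y)) x := by
    unfold vdiv
    rw [hFeq.fderiv_eq]
  have hpos : 0 < ε^2 + ‖((T - u₀ x)^2)⁻¹ • gradient u₀ x‖^2 := by positivity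
  have hkey := vdiv_sqrt_smul hG (ε^2) hpos
  -- norm of G x
  have hnorm : ‖((T - u₀ x)^2)⁻¹ • gradient u₀ x‖^2 = ((τ^2)⁻¹)^2 * a^2 := by
    rw [← hτdef, norm_smul, Real.norm_eq_abs, mul_pow, sq_abs, ← hadef]
  -- inner product term
  have hinner2 : ⟪((T - u₀ x)^2)⁻¹ • gradient u₀ x, G' (((T - u₀ x)^2)⁻¹ • gradient u₀ x)⟫
      = (τ^2)⁻¹^3*q + (τ^2)⁻¹^2*(2/τ^3)*a^4 := by
    rw [← hτdef, hG'def]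
    simp only [ContinuousLinearMap.add_apply, ContinuousLinearMap.smul_apply,
      ContinuousLinearMap.smulRight_apply, map_smul, inner_add_right, real_inner_smul_left,
      real_inner_smul_right, smul_eq_mul]
    rw [hLp, real_inner_self_eq_norm_sq, ← hadef, ← hqdef]
    ring
  -- trace term
  have htr2 : (∑ i, (G' (EuclideanSpace.single i 1)) i) = (τ^2)⁻¹ * tr + (2/τ^3) * a^2 := by
    have hterm : ∀ i, (G' (EuclideanSpace.single i 1)) i
        = (τ^2)⁻¹ * (H (EuclideanSpace.single i 1)) i
          + (2/τ^3) * (L (EuclideanSpace.single i 1) * (gradient u₀ x) i) := by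
      intro i
      rw [hG'def]
      simp only [ContinuousLinearMap.add_apply, ContinuousLinearMap.smul_apply,
        ContinuousLinearMap.smulRight_apply, PiLp.add_apply, PiLp.smul_apply, smul_eq_mul]
      ring
    rw [Finset.sum_congr rfl fun i _ => hterm i, Finset.sum_add_distrib, ← Finset.mul_sum,
      ← Finset.mul_sum, sum_apply_single L (gradient u₀ x), hLp, ← htrdef]
  -- assemble
  have hvx : 0 ≤ (T - u₀ x)⁻¹ - T⁻¹ := by
    rw [← hτdef]
    have := inv_anti₀ hτ0 hτT
    linarith
  unfold Qop
  beta_reduce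
  rw [hvdeq, hkey, hgv x hxW, hnorm, hinner2, htr2, htr]
  rw [← hτdef]
  have hfinal := final_ineq C₀ τ a q ε σ (τ⁻¹ - T⁻¹) hC₀ hτ0 hτT ha1 ha2 hq hε hε1 hσ
    hvx
  calc -(((τ^2)⁻¹^3*q + (τ^2)⁻¹^2*(2/τ^3)*a^4)
        / Real.sqrt (ε^2 + ((τ^2)⁻¹)^2*a^2)^3)
      + ((τ^2)⁻¹*(q/a^2 - 1) + (2/τ^3)*a^2) / Real.sqrt (ε^2 + ((τ^2)⁻¹)^2*a^2)
      + 1 / Real.sqrt (ε^2 + ((τ^2)⁻¹)^2*a^2) - σ*(τ⁻¹ - T⁻¹) ≤ 0 := hfinal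
end

section
/- Subsolution computation of Remark 3.4 (Euclidean-ambient case, used for the uniform lower bound on the boundary gradient): let U ⊆ ℝⁿ be open and let u₀ be a C² function on U satisfying, for some constant C₀ ≥ 1: 1/C₀ ≤ |Du₀| ≤ C₀, |D²u₀| ≤ C₀, and div(Du₀/|Du₀|) + 1/|Du₀| = 0 on U. Then for every T ∈ (0,1] there exists c₁ > 0 depending only on C₀ such that for every ε ∈ (0,1] and σ ∈ (0,1], the function v = c₁ u₀ (T − u₀) satisfies the subsolution inequality div(Dv/√(ε² + |Dv|²)) + 1/√(ε² + |Dv|²) ≥ σv on U ∩ {0 ≤ u₀ < T}. -/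
open scoped BigOperators RealInnerProductSpace

lemma sum_clm_apply_mul {n : ℕ} (ℓ : EuclideanSpace ℝ (Fin n) →L[ℝ] ℝ)
    (w : EuclideanSpace ℝ (Fin n)) :
    ∑ i, ℓ (EuclideanSpace.single i 1) * w i = ℓ w := by
  have hw : w = ∑ i, w i • EuclideanSpace.single i (1:ℝ) := by
    ext j
    rw [WithLp.ofLp_sum, Finset.sum_apply]
    simp [EuclideanSpace.single_apply]
  conv_rhs => rw [hw]
  rw [map_sum]
  simp [mul_comm]

lemma vdiv_smul_eq {n : ℕ} {G : EuclideanSpace ℝ (Fin n) → EuclideanSpace ℝ (Fin n)}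
    {s : EuclideanSpace ℝ (Fin n) → ℝ}
    {f : EuclideanSpace ℝ (Fin n) →L[ℝ] EuclideanSpace ℝ (Fin n)}
    {ds : EuclideanSpace ℝ (Fin n) →L[ℝ] ℝ}
    {x : EuclideanSpace ℝ (Fin n)}
    (hG : HasFDerivAt G f x) (hs : HasFDerivAt s ds x) :
    vdiv (fun y => s y • G y) x
      = s x * (∑ i, f (EuclideanSpace.single i 1) i) + ds (G x) := by
  have h := hs.smul hG
  rw [vdiv, show (fun y => s y • G y) = s • G from rfl, h.fderiv]
  simp only [ContinuousLinearMap.add_apply, ContinuousLinearMap.coe_smul', Pi.smul_apply,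
    ContinuousLinearMap.smulRight_apply, PiLp.add_apply, PiLp.smul_apply, smul_eq_mul]
  rw [Finset.sum_add_distrib, ← Finset.mul_sum, ← sum_clm_apply_mul ds (G x)]


set_option maxHeartbeats 1000000 in
lemma final_ineq_s10 (C₀ a r s mx B ε σ T u0x : ℝ) (hC₀ : 1 ≤ C₀)
    (ha : a = (8*C₀^2)⁻¹)
    (hε0 : 0 < ε) (hε1 : ε ≤ 1) (hσ0 : 0 < σ) (hσ1 : σ ≤ 1)
    (hT0 : 0 < T) (hT1 : T ≤ 1) (hx0 : 0 ≤ u0x) (hxT : u0x < T)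
    (hmxdef : mx = a * (T - 2 * u0x))
    (hrpos : 0 < r) (hr1 : C₀⁻¹ ≤ r) (hr2 : r ≤ C₀)
    (hB : |B| ≤ C₀ * r ^ 2)
    (hspos : 0 < s) (hsq : s ^ 2 = ε ^ 2 + mx ^ 2 * r ^ 2) :
    0 ≤ s⁻¹ * mx * (B / r ^ 2 - 1) +
      (s⁻¹ * (a * -(2 * r ^ 2)) +
        mx * (-(1 / (2 * s)) / s ^ 2 *
          (mx ^ 2 * (2 * B) + r ^ 2 * (mx * (a * -(2 * r ^ 2)) + mx * (a * -(2 * r ^ 2)))))) +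
      1 / s - σ * (a * u0x * (T - u0x)) := by
  have hC0 : (0:ℝ) < C₀ := lt_of_lt_of_le one_pos hC₀
  have hapos : 0 < a := by rw [ha]; positivity
  have hsne : s ≠ 0 := ne_of_gt hspos
  have hrne : r ≠ 0 := ne_of_gt hrpos
  have hmx : |mx| ≤ a := by
    rw [hmxdef, abs_mul, abs_of_pos hapos]
    have h1 : |T - 2 * u0x| ≤ T := abs_le.mpr ⟨by linarith, by linarith⟩
    nlinarith
  have haC2 : a * C₀ ^ 2 = 1 / 8 := by rw [ha]; field_simp
  have ha8 : a ≤ 1 / 8 := by nlinarith [sq_nonneg (C₀ - 1)]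
  have haC : a * C₀ ≤ 1 / 8 := by nlinarith
  have hrC2 : r ^ 2 ≤ C₀ ^ 2 := by nlinarith
  have hmx2 : mx ^ 2 ≤ a ^ 2 := by nlinarith [abs_nonneg mx, sq_abs mx]
  have hsle : s ≤ 3 / 2 := by
    have h1 : mx ^ 2 * r ^ 2 ≤ a ^ 2 * C₀ ^ 2 := mul_le_mul hmx2 hrC2 (sq_nonneg r) (sq_nonneg a)
    have h2 : a ^ 2 * C₀ ^ 2 = a / 8 := by rw [ha]; field_simp
    nlinarith [hsq, h1, h2, ha8, hspos, hε1, hε0]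
  have hu4 : u0x * (T - u0x) ≤ 1 / 4 := by nlinarith [sq_nonneg (T - 2*u0x), hT1, hT0, hx0]
  have hu0 : 0 ≤ u0x * (T - u0x) := by nlinarith
  have hE0 : 0 ≤ s ^ 2 - mx ^ 2 * r ^ 2 := by nlinarith [sq_nonneg ε]
  have hE1 : s ^ 2 - mx ^ 2 * r ^ 2 ≤ s ^ 2 := by nlinarith [sq_nonneg (mx*r)]
  have hiden : s⁻¹ * mx * (B / r ^ 2 - 1) +
      (s⁻¹ * (a * -(2 * r ^ 2)) +
        mx * (-(1 / (2 * s)) / s ^ 2 *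
          (mx ^ 2 * (2 * B) + r ^ 2 * (mx * (a * -(2 * r ^ 2)) + mx * (a * -(2 * r ^ 2)))))) +
      1 / s - σ * (a * u0x * (T - u0x))
      = (mx * B * (s ^ 2 - mx ^ 2 * r ^ 2) - 2 * a * r ^ 4 * (s ^ 2 - mx ^ 2 * r ^ 2)
          + r ^ 2 * s ^ 2 * (1 - mx) - σ * (a * (u0x * (T - u0x))) * r ^ 2 * s ^ 3)
        / (r ^ 2 * s ^ 3) := by
    field_simp
    ring
  rw [hiden]
  clear hiden
  apply div_nonneg _ (by positivity)
  have hrs : (0:ℝ) ≤ r ^ 2 * s ^ 2 := by positivity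
  have t1 : -(1 / 8 * (r ^ 2 * s ^ 2)) ≤ mx * B * (s ^ 2 - mx ^ 2 * r ^ 2) := by
    have h1 : |mx * B| ≤ a * (C₀ * r ^ 2) := by
      rw [abs_mul]; exact mul_le_mul hmx hB (abs_nonneg _) hapos.le
    have h2 : |mx * B * (s ^ 2 - mx ^ 2 * r ^ 2)| ≤ a * (C₀ * r ^ 2) * s ^ 2 := by
      rw [abs_mul, abs_of_nonneg hE0]
      exact mul_le_mul h1 hE1 hE0 (by positivity)
    have h3' := neg_abs_le (mx * B * (s ^ 2 - mx ^ 2 * r ^ 2))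
    nlinarith [mul_le_mul_of_nonneg_right haC (le_of_lt (mul_pos (by positivity : (0:ℝ) < r ^ 2)
      (by positivity : (0:ℝ) < s ^ 2)))]
  have t2 : 2 * a * r ^ 4 * (s ^ 2 - mx ^ 2 * r ^ 2) ≤ 1 / 4 * (r ^ 2 * s ^ 2) := by
    have h1 : 2 * a * r ^ 4 * (s ^ 2 - mx ^ 2 * r ^ 2) ≤ 2 * a * r ^ 4 * s ^ 2 :=
      mul_le_mul_of_nonneg_left hE1 (by positivity)
    have h2 : 2 * a * r ^ 4 * s ^ 2 ≤ 2 * a * (C₀ ^ 2 * r ^ 2) * s ^ 2 := by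
      have h3 : r ^ 4 ≤ C₀ ^ 2 * r ^ 2 := by nlinarith
      nlinarith [mul_le_mul_of_nonneg_right h3
        (mul_nonneg (by positivity : (0:ℝ) ≤ 2*a) (sq_nonneg s))]
    nlinarith
  have t3 : 7 / 8 * (r ^ 2 * s ^ 2) ≤ r ^ 2 * s ^ 2 * (1 - mx) := by
    have h1 : mx ≤ 1 / 8 := le_trans (le_abs_self mx) (le_trans hmx ha8)
    nlinarith [mul_le_mul_of_nonneg_left h1 hrs]
  have t4 : σ * (a * (u0x * (T - u0x))) * r ^ 2 * s ^ 3 ≤ 3 / 64 * (r ^ 2 * s ^ 2) := by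
    have hX0 : 0 ≤ a * (u0x * (T - u0x)) := by positivity
    have hX2 : a * (u0x * (T - u0x)) ≤ 1 / 32 := by
      calc a * (u0x * (T - u0x)) ≤ (1/8) * (1/4) :=
            mul_le_mul ha8 hu4 hu0 (by norm_num)
        _ = 1 / 32 := by norm_num
    have h1 : σ * (a * (u0x * (T - u0x))) ≤ 1 / 32 := by
      calc σ * (a * (u0x * (T - u0x))) ≤ 1 * (a * (u0x * (T - u0x))) :=
            mul_le_mul_of_nonneg_right hσ1 hX0
        _ = a * (u0x * (T - u0x)) := one_mul _
        _ ≤ 1 / 32 := hX2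
    have h0 : 0 ≤ σ * (a * (u0x * (T - u0x))) := by positivity
    have h2 : s ^ 3 ≤ 3 / 2 * s ^ 2 := by
      calc s ^ 3 = s * s ^ 2 := by ring
        _ ≤ (3/2) * s ^ 2 := mul_le_mul_of_nonneg_right hsle (sq_nonneg s)
    calc σ * (a * (u0x * (T - u0x))) * r ^ 2 * s ^ 3
        = (σ * (a * (u0x * (T - u0x))) * r ^ 2) * s ^ 3 := by ring
      _ ≤ (1 / 32 * r ^ 2) * (3 / 2 * s ^ 2) := by
          refine mul_le_mul (mul_le_mul_of_nonneg_right h1 (sq_nonneg r)) h2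
            (by positivity) (by positivity)
      _ = 3 / 64 * (r ^ 2 * s ^ 2) := by ring
  linarith


set_option maxHeartbeats 2000000 in
/-- subsolution computation of Remark 3.4 (Euclidean-ambient case):
`v = c₁ u₀ (T − u₀)` satisfies `div(Dv/√(ε²+|Dv|²)) + 1/√(ε²+|Dv|²) ≥ σ v`,
written as `Qop ε σ 1 v x ≥ 0`. -/
theorem bending_subsolution (C₀ : ℝ) (hC₀ : 1 ≤ C₀) :
    ∃ c₁ : ℝ, 0 < c₁ ∧
      ∀ (T : ℝ), 0 < T → T ≤ 1 →
      ∀ (n : ℕ) (U : Set (EuclideanSpace ℝ (Fin n))) (u₀ : EuclideanSpace ℝ (Fin n) → ℝ)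
        (ε σ : ℝ), IsOpen U → ContDiffOn ℝ 2 u₀ U →
        (∀ x ∈ U, C₀⁻¹ ≤ ‖gradient u₀ x‖) → (∀ x ∈ U, ‖gradient u₀ x‖ ≤ C₀) →
        (∀ x ∈ U, ‖fderiv ℝ (gradient u₀) x‖ ≤ C₀) →
        (∀ x ∈ U, vdiv (fun y => ‖gradient u₀ y‖⁻¹ • gradient u₀ y) x + ‖gradient u₀ x‖⁻¹ = 0) →
        0 < ε → ε ≤ 1 → 0 < σ → σ ≤ 1 →
        ∀ x ∈ U ∩ {y | 0 ≤ u₀ y ∧ u₀ y < T},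
          0 ≤ Qop ε σ 1 (fun y => c₁ * u₀ y * (T - u₀ y)) x := by
  have hC0 : (0:ℝ) < C₀ := lt_of_lt_of_le one_pos hC₀
  refine ⟨(8*C₀^2)⁻¹, by positivity, ?_⟩
  intro T hT0 hT1 n U u₀ ε σ hUo hu2 h3 h4 h5 h6 hε0 hε1 hσ0 hσ1 x hx
  obtain ⟨hxU, hx0, hxT⟩ := hx
  set a : ℝ := (8*C₀^2)⁻¹ with ha
  -- differentiability of u₀ and its gradient
  have hcd2 : ContDiffAt ℝ 2 u₀ x := hu2.contDiffAt (hUo.mem_nhds hxU)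
  have hGdiff : DifferentiableAt ℝ (gradient u₀) x := by
    have hfd1 : ContDiffAt ℝ 1 (fderiv ℝ u₀) x := hcd2.fderiv_right (by norm_num)
    have h1 : DifferentiableAt ℝ (fderiv ℝ u₀) x := hfd1.differentiableAt one_ne_zero
    have := ((InnerProductSpace.toDual ℝ
        (EuclideanSpace ℝ (Fin n))).symm.toContinuousLinearEquiv.differentiableAt).comp x h1
    exact this
  have hGf : HasFDerivAt (gradient u₀) (fderiv ℝ (gradient u₀) x) x := hGdiff.hasFDerivAt
  -- gradient of w on U
  have hgradw : ∀ y ∈ U, HasGradientAt (fun z => a * u₀ z * (T - u₀ z))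
      ((a*(T - 2*u₀ y)) • gradient u₀ y) y := by
    intro y hy
    have hdy : DifferentiableAt ℝ u₀ y :=
      (hu2.contDiffAt (hUo.mem_nhds hy)).differentiableAt two_ne_zero
    have hu' : HasFDerivAt u₀ ((InnerProductSpace.toDual ℝ _) (gradient u₀ y)) y :=
      hdy.hasGradientAt.hasFDerivAt
    have h1 : HasFDerivAt (fun z => a * u₀ z * (T - u₀ z)) _ y := (hu'.const_mul a).mul (hu'.const_sub T)
    rw [hasGradientAt_iff_hasFDerivAt]
    refine h1.congr_fderiv ?_
    ext h
    simp [InnerProductSpace.toDual_apply_apply, real_inner_smul_left]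
    ring
  -- eventual equality of the Qop vector field with the structured field
  have hFeq : (fun y => (Real.sqrt (ε^2 + ‖gradient (fun z => a * u₀ z * (T - u₀ z)) y‖^2))⁻¹
        • gradient (fun z => a * u₀ z * (T - u₀ z)) y)
      =ᶠ[nhds x] (fun y => ((Real.sqrt (ε^2 + (a*(T - 2*u₀ y))^2 * ‖gradient u₀ y‖^2))⁻¹
        * (a*(T - 2*u₀ y))) • gradient u₀ y) := by
    filter_upwards [hUo.mem_nhds hxU] with y hy
    rw [(hgradw y hy).gradient, norm_smul, smul_smul]
    simp [mul_pow, sq_abs, Real.norm_eq_abs]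
  -- derivative chain at x
  have hdx : DifferentiableAt ℝ u₀ x := hcd2.differentiableAt two_ne_zero
  have hu' : HasFDerivAt u₀ ((InnerProductSpace.toDual ℝ _) (gradient u₀ x)) x :=
    hdx.hasGradientAt.hasFDerivAt
  have hm : HasFDerivAt (fun y => a*(T - 2*u₀ y))
      (a • -((2:ℝ) • (InnerProductSpace.toDual ℝ _) (gradient u₀ x))) x :=
    ((hu'.const_mul 2).const_sub T).const_mul a
  have hmm : HasFDerivAt (fun y => (a*(T - 2*u₀ y)) * (a*(T - 2*u₀ y))) _ x := hm.mul hm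
  have hpow : (fun y => (a*(T - 2*u₀ y))^2) = (fun y => (a*(T - 2*u₀ y)) * (a*(T - 2*u₀ y))) := by
    funext y; ring
  have hm2 : HasFDerivAt (fun y => (a*(T - 2*u₀ y))^2) _ x := hpow ▸ hmm
  have hn2 : HasFDerivAt (fun y => ‖gradient u₀ y‖^2)
      (2 • (innerSL ℝ (gradient u₀ x)).comp (fderiv ℝ (gradient u₀) x)) x := hGf.norm_sq
  have hq' : HasFDerivAt (fun y => ε^2 + (a*(T - 2*u₀ y))^2 * ‖gradient u₀ y‖^2) _ x :=
    (hm2.mul hn2).const_add (ε^2)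
  have hqpos : (0:ℝ) < ε^2 + (a*(T - 2*u₀ x))^2 * ‖gradient u₀ x‖^2 := by positivity
  have hsqrt : HasDerivAt Real.sqrt
      (1 / (2 * Real.sqrt (ε^2 + (a*(T - 2*u₀ x))^2 * ‖gradient u₀ x‖^2)))
      (ε^2 + (a*(T - 2*u₀ x))^2 * ‖gradient u₀ x‖^2) := Real.hasDerivAt_sqrt (ne_of_gt hqpos)
  have hspos : (0:ℝ) < Real.sqrt (ε^2 + (a*(T - 2*u₀ x))^2 * ‖gradient u₀ x‖^2) :=
    Real.sqrt_pos.mpr hqpos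
  have hinv : HasDerivAt (fun t => (Real.sqrt t)⁻¹) _ _ := hsqrt.inv (ne_of_gt hspos)
  have hrec : HasFDerivAt
      (fun y => (Real.sqrt (ε^2 + (a*(T - 2*u₀ y))^2 * ‖gradient u₀ y‖^2))⁻¹) _ x :=
    (hinv.comp_hasFDerivAt x hq' :)
  have hst : HasFDerivAt
      (fun y => (Real.sqrt (ε^2 + (a*(T - 2*u₀ y))^2 * ‖gradient u₀ y‖^2))⁻¹
        * (a*(T - 2*u₀ y))) _ x := hrec.mul hm
  have hkey := vdiv_smul_eq hGf hst
  simp only [ContinuousLinearMap.add_apply, ContinuousLinearMap.coe_smul', Pi.smul_apply,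
    ContinuousLinearMap.smul_apply, ContinuousLinearMap.neg_apply, ContinuousLinearMap.comp_apply,
    innerSL_apply_apply, InnerProductSpace.toDual_apply_apply, smul_eq_mul, nsmul_eq_mul, Nat.cast_ofNat,
    real_inner_self_eq_norm_sq] at hkey
  -- hypothesis identity
  have hrpos : 0 < ‖gradient u₀ x‖ := lt_of_lt_of_le (inv_pos.mpr hC0) (h3 x hxU)
  have hfun0 : (fun y => ‖gradient u₀ y‖⁻¹ • gradient u₀ y)
      = (fun y => (Real.sqrt (‖gradient u₀ y‖^2))⁻¹ • gradient u₀ y) := by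
    funext y; rw [Real.sqrt_sq (norm_nonneg _)]
  have h6x := h6 x hxU
  rw [hfun0] at h6x
  have hr2pos : 0 < ‖gradient u₀ x‖^2 := by positivity
  have hsq0 : HasDerivAt Real.sqrt (1/(2*Real.sqrt (‖gradient u₀ x‖^2)))
      (‖gradient u₀ x‖^2) := Real.hasDerivAt_sqrt (ne_of_gt hr2pos)
  have hs0pos : 0 < Real.sqrt (‖gradient u₀ x‖^2) := Real.sqrt_pos.mpr hr2pos
  have hinv0 : HasDerivAt (fun t => (Real.sqrt t)⁻¹) _ _ := hsq0.inv (ne_of_gt hs0pos)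
  have hrec0 : HasFDerivAt (fun y => (Real.sqrt (‖gradient u₀ y‖^2))⁻¹) _ x :=
    (hinv0.comp_hasFDerivAt x hn2 :)
  rw [vdiv_smul_eq hGf hrec0] at h6x
  simp only [ContinuousLinearMap.add_apply, ContinuousLinearMap.coe_smul', Pi.smul_apply,
    ContinuousLinearMap.smul_apply, ContinuousLinearMap.neg_apply, ContinuousLinearMap.comp_apply,
    innerSL_apply_apply, InnerProductSpace.toDual_apply_apply, smul_eq_mul, nsmul_eq_mul, Nat.cast_ofNat,
    real_inner_self_eq_norm_sq, Real.sqrt_sq (norm_nonneg (gradient u₀ x))] at h6x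
  -- abbreviations
  set r := ‖gradient u₀ x‖ with hrdef
  set tr := ∑ i : Fin n, (fderiv ℝ (gradient u₀) x) (EuclideanSpace.single i 1) i with htrdef
  set B : ℝ := inner ℝ (gradient u₀ x) ((fderiv ℝ (gradient u₀) x) (gradient u₀ x)) with hBdef
  set mx := a * (T - 2 * u₀ x) with hmxdef
  set s := Real.sqrt (ε ^ 2 + mx ^ 2 * r ^ 2) with hsdef
  have hrne : r ≠ 0 := ne_of_gt hrpos
  have h_tr : tr = B / r^2 - 1 := by
    field_simp at h6x ⊢
    nlinarith [h6x, sq_nonneg r]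
  clear h6x hfun0 hrec0 hinv0 hsq0
  -- unfold Qop and rewrite
  have hveq : vdiv (fun y => (Real.sqrt (ε^2 + ‖gradient (fun z => a * u₀ z * (T - u₀ z)) y‖^2))⁻¹
        • gradient (fun z => a * u₀ z * (T - u₀ z)) y) x
      = vdiv (fun y => ((Real.sqrt (ε^2 + (a*(T - 2*u₀ y))^2 * ‖gradient u₀ y‖^2))⁻¹
        * (a*(T - 2*u₀ y))) • gradient u₀ y) x := by
    unfold vdiv; rw [hFeq.fderiv_eq]
  rw [Qop, hveq, hkey, (hgradw x hxU).gradient, norm_smul]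
  simp only [mul_pow, sq_abs, Real.norm_eq_abs]
  have hfold : Real.sqrt (ε ^ 2 + a ^ 2 * (T - 2 * u₀ x) ^ 2 * ‖gradient u₀ x‖ ^ 2) = s := by
    rw [hsdef]; congr 1; rw [hmxdef, hrdef]; ring
  rw [hfold, h_tr]
  -- remaining facts for the arithmetic lemma
  have hsq : s ^ 2 = ε ^ 2 + mx ^ 2 * r ^ 2 := by rw [hsdef]; exact Real.sq_sqrt hqpos.le
  have hr1 : C₀⁻¹ ≤ r := h3 x hxU
  have hr2 : r ≤ C₀ := h4 x hxU
  have hB : |B| ≤ C₀ * r ^ 2 := by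
    have h5x := h5 x hxU
    have h1 : |B| ≤ ‖gradient u₀ x‖ * ‖(fderiv ℝ (gradient u₀) x) (gradient u₀ x)‖ := by
      rw [hBdef]; exact abs_real_inner_le_norm _ _
    have h2 : ‖(fderiv ℝ (gradient u₀) x) (gradient u₀ x)‖
        ≤ ‖fderiv ℝ (gradient u₀) x‖ * ‖gradient u₀ x‖ :=
      (fderiv ℝ (gradient u₀) x).le_opNorm _
    have h3' : (0:ℝ) ≤ ‖gradient u₀ x‖ := norm_nonneg _
    nlinarith [norm_nonneg ((fderiv ℝ (gradient u₀) x) (gradient u₀ x)), hrpos]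
  exact final_ineq_s10 C₀ a r s mx B ε σ T (u₀ x) hC₀ ha hε0 hε1 hσ0 hσ1 hT0 hT1 hx0 hxT
    hmxdef hrpos hr1 hr2 hB hspos hsq
end

section
/- Norm of the symmetric traceless projection of X⊗A (combined computation in the proof of Proposition 4.3): for every n×n real symmetric matrix A and every unit vector X ∈ ℝⁿ, writing T = (X⊗A)^{sym}, one has |T − T^tr|² = (1/3)|A|² + (2/3)|AX|² − (1/(3(n+2))) |2AX + (tr A)X|². -/
open scoped BigOperators

/-- A 3-tensor on ℝⁿ. -/
abbrev Tensor3 (n : ℕ) := Fin n → Fin n → Fin n → ℝ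

/-- Inner product of 3-tensors: `⟨T,S⟩ = Σ_{i,j,k} T_{ijk} S_{ijk}`. -/
def tInner {n : ℕ} (T S : Tensor3 n) : ℝ := ∑ i, ∑ j, ∑ k, T i j k * S i j k

/-- Norm of a 3-tensor. -/
noncomputable def tNorm {n : ℕ} (T : Tensor3 n) : ℝ := Real.sqrt (tInner T T)

/-- A 3-tensor is totally symmetric if it is invariant under all permutations of indices. -/
def TotSym {n : ℕ} (T : Tensor3 n) : Prop :=
  ∀ i j k, T i j k = T j i k ∧ T i j k = T i k j

/-- A 3-tensor is totally traceless if all three contractions vanish. -/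
def TotTraceless {n : ℕ} (T : Tensor3 n) : Prop :=
  ∀ k, (∑ p, T p p k = 0) ∧ (∑ p, T p k p = 0) ∧ (∑ p, T k p p = 0)

/-- The trace vector `t_k = Σ_p T_{ppk}` of a 3-tensor. -/
def traceVec {n : ℕ} (T : Tensor3 n) (k : Fin n) : ℝ := ∑ p, T p p k

/-- The trace part `T^tr_{ijk} = (1/(n+2))(t_i δ_{jk} + t_j δ_{ik} + t_k δ_{ij})`. -/
noncomputable def tracePart {n : ℕ} (T : Tensor3 n) : Tensor3 n := fun i j k =>
  (1 / ((n : ℝ) + 2)) * (traceVec T i * (if j = k then 1 else 0)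
    + traceVec T j * (if i = k then 1 else 0)
    + traceVec T k * (if i = j then 1 else 0))

/-- The symmetrization `(X⊗A)^{sym}_{ijk} = (1/3)(X_i A_{jk} + X_j A_{ik} + X_k A_{ij})`. -/
noncomputable def symXA {n : ℕ} (X : Fin n → ℝ) (A : Matrix (Fin n) (Fin n) ℝ) : Tensor3 n := fun i j k =>
  (1 / 3) * (X i * A j k + X j * A i k + X k * A i j)

/- ### Auxiliary lemmas -/

lemma aux_tInner_sub {n : ℕ} (T S : Tensor3 n) :
    tInner (T - S) (T - S) = tInner T T - 2 * tInner T S + tInner S S := by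
  unfold tInner
  have h : ∀ i j k : Fin n, (T - S) i j k * (T - S) i j k
      = T i j k * T i j k - 2 * (T i j k * S i j k) + S i j k * S i j k := by
    intro i j k; simp only [Pi.sub_apply]; ring
  simp only [h, Finset.sum_add_distrib, Finset.sum_sub_distrib, Finset.mul_sum]

lemma aux_deltaSum {n : ℕ} (f g : Fin n → ℝ) :
    ∑ i : Fin n, ∑ j : Fin n, ∑ k : Fin n,
      (f i * (if j = k then (1:ℝ) else 0) + f j * (if i = k then 1 else 0) + f k * (if i = j then 1 else 0))
        * (g i * (if j = k then 1 else 0) + g j * (if i = k then 1 else 0) + g k * (if i = j then 1 else 0))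
      = (3 * (n:ℝ) + 6) * ∑ i, f i * g i := by
  simp only [add_mul, mul_add, Finset.sum_add_distrib, mul_ite, ite_mul, mul_one, mul_zero,
    zero_mul, one_mul, Finset.sum_ite_eq, Finset.sum_ite_eq', Finset.mem_univ, if_true]
  simp [Finset.sum_add_distrib, Finset.mul_sum, Finset.sum_ite_eq, Finset.sum_ite_eq',
    Finset.card_univ, mul_comm, mul_left_comm]
  simp only [← Finset.sum_mul]
  ring

lemma aux_inner_tracePart {n : ℕ} (T : Tensor3 n) (hT : TotSym T) :
    tInner T (tracePart T) = (3 / ((n:ℝ) + 2)) * ∑ k, traceVec T k ^ 2 := by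
  simp only [tInner, tracePart, mul_ite, ite_mul, mul_one, mul_zero, mul_add,
    Finset.sum_add_distrib, Finset.sum_ite_eq, Finset.sum_ite_eq', Finset.mem_univ, if_true,
    ← Finset.mul_sum]
  have h1 : ∀ x, (∑ y, T x y y) = traceVec T x := by
    intro x
    unfold traceVec
    exact Finset.sum_congr rfl fun y _ => ((hT x y y).1.trans (hT y x y).2)
  have h2 : ∀ y, (∑ x, T x y x) = traceVec T y := by
    intro y
    unfold traceVec
    exact Finset.sum_congr rfl fun x _ => (hT x y x).2
  have e1 : (∑ x : Fin n, ∑ y : Fin n, T x y y * (1 / ((n:ℝ) + 2) * traceVec T x))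
      = 1 / ((n:ℝ) + 2) * ∑ k, traceVec T k ^ 2 := by
    rw [Finset.mul_sum]
    refine Finset.sum_congr rfl fun x _ => ?_
    rw [← Finset.sum_mul, h1]; ring
  have e2 : (∑ x : Fin n, ∑ y : Fin n, T x y x * (1 / ((n:ℝ) + 2) * traceVec T y))
      = 1 / ((n:ℝ) + 2) * ∑ k, traceVec T k ^ 2 := by
    rw [Finset.sum_comm, Finset.mul_sum]
    refine Finset.sum_congr rfl fun y _ => ?_
    rw [← Finset.sum_mul, h2]; ring
  have e3 : (∑ x : Fin n, ∑ y : Fin n, ∑ z : Fin n,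
        if x = y then T x y z * (1 / ((n:ℝ) + 2) * traceVec T z) else 0)
      = 1 / ((n:ℝ) + 2) * ∑ k, traceVec T k ^ 2 := by
    have h3 : ∀ x : Fin n, (∑ y : Fin n, ∑ z : Fin n,
        if x = y then T x y z * (1 / ((n:ℝ) + 2) * traceVec T z) else 0)
        = ∑ z : Fin n, T x x z * (1 / ((n:ℝ) + 2) * traceVec T z) := by
      intro x
      rw [Finset.sum_comm]
      simp [Finset.sum_ite_eq]
    simp only [h3]
    rw [Finset.sum_comm, Finset.mul_sum]
    refine Finset.sum_congr rfl fun z _ => ?_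
    rw [← Finset.sum_mul]
    unfold traceVec; ring
  rw [e1, e2, e3]; ring

lemma aux_inner_tracePart_self {n : ℕ} (T : Tensor3 n) :
    tInner (tracePart T) (tracePart T) = (3 / ((n:ℝ) + 2)) * ∑ k, traceVec T k ^ 2 := by
  have hc : ∀ P Q : ℝ, (1 / ((n:ℝ) + 2) * P) * (1 / ((n:ℝ) + 2) * Q)
      = (1 / ((n:ℝ) + 2))^2 * (P * Q) := by intros; ring
  simp only [tInner, tracePart, hc, ← Finset.mul_sum]
  rw [aux_deltaSum]
  have hn : ((n:ℝ) + 2) ≠ 0 := by positivity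
  have hsq : ∀ k : Fin n, traceVec T k * traceVec T k = traceVec T k ^ 2 := fun k => (sq _).symm
  simp only [hsq]
  field_simp
  ring

lemma aux_sum3_split_k {n : ℕ} (u v : Fin n → Fin n → ℝ) :
    ∑ i : Fin n, ∑ j : Fin n, ∑ k : Fin n, u i k * v j k
      = ∑ k : Fin n, (∑ i, u i k) * (∑ j, v j k) := by
  have h : ∀ i : Fin n, (∑ j : Fin n, ∑ k : Fin n, u i k * v j k)
      = ∑ k : Fin n, u i k * (∑ j, v j k) := by
    intro i
    rw [Finset.sum_comm]
    exact Finset.sum_congr rfl fun k _ => (Finset.mul_sum _ _ _).symm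
  simp only [h]
  rw [Finset.sum_comm]
  exact Finset.sum_congr rfl fun k _ => (Finset.sum_mul _ _ _).symm

lemma aux_sum3_split_j {n : ℕ} (u v : Fin n → Fin n → ℝ) :
    ∑ i : Fin n, ∑ j : Fin n, ∑ k : Fin n, u i j * v k j
      = ∑ j : Fin n, (∑ i, u i j) * (∑ k, v k j) := by
  have h : ∀ i : Fin n, (∑ j : Fin n, ∑ k : Fin n, u i j * v k j)
      = ∑ j : Fin n, u i j * (∑ k, v k j) :=
    fun i => Finset.sum_congr rfl fun j _ => (Finset.mul_sum _ _ _).symm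
  simp only [h]
  rw [Finset.sum_comm]
  exact Finset.sum_congr rfl fun j _ => (Finset.sum_mul _ _ _).symm

lemma aux_sum3_split_i {n : ℕ} (u v : Fin n → Fin n → ℝ) :
    ∑ i : Fin n, ∑ j : Fin n, ∑ k : Fin n, u j i * v k i
      = ∑ i : Fin n, (∑ j, u j i) * (∑ k, v k i) := by
  refine Finset.sum_congr rfl fun i _ => ?_
  have h : ∀ j : Fin n, (∑ k : Fin n, u j i * v k i) = u j i * (∑ k, v k i) :=
    fun j => (Finset.mul_sum _ _ _).symm
  simp only [h]
  exact (Finset.sum_mul _ _ _).symm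

lemma aux_Hmv {n : ℕ} (A : Matrix (Fin n) (Fin n) ℝ) (hA : A.IsSymm) (X : Fin n → ℝ) (k : Fin n) :
    (∑ p, X p * A p k) = A.mulVec X k := by
  simp only [Matrix.mulVec, dotProduct]
  exact Finset.sum_congr rfl fun p _ => by rw [← hA.apply k p]; ring

lemma aux_Hmv' {n : ℕ} (A : Matrix (Fin n) (Fin n) ℝ) (X : Fin n → ℝ) (j : Fin n) :
    (∑ k, X k * A j k) = A.mulVec X j := by
  simp only [Matrix.mulVec, dotProduct]
  exact Finset.sum_congr rfl fun p _ => by ring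

lemma aux_totSym_symXA {n : ℕ} (X : Fin n → ℝ) (A : Matrix (Fin n) (Fin n) ℝ) (hA : A.IsSymm) :
    TotSym (symXA X A) := by
  intro i j k
  constructor <;> · unfold symXA
                    rw [← hA.apply i j, ← hA.apply i k, ← hA.apply j k]
                    ring

lemma aux_traceVec_symXA {n : ℕ} (X : Fin n → ℝ) (A : Matrix (Fin n) (Fin n) ℝ)
    (hA : A.IsSymm) (k : Fin n) :
    traceVec (symXA X A) k = (1 / 3) * (2 * A.mulVec X k + Matrix.trace A * X k) := by
  unfold traceVec symXA
  have h : ∀ p : Fin n, (1:ℝ) / 3 * (X p * A p k + X p * A p k + X k * A p p)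
      = (2/3) * (X p * A p k) + (1/3) * (A p p * X k) := by intro p; ring
  simp only [h, Finset.sum_add_distrib, ← Finset.mul_sum]
  rw [aux_Hmv A hA X k, ← Finset.sum_mul]
  rw [Matrix.trace]
  simp only [Matrix.diag]
  ring

lemma aux_inner_symXA_self {n : ℕ} (A : Matrix (Fin n) (Fin n) ℝ) (hA : A.IsSymm)
    (X : Fin n → ℝ) (hX : ∑ i, X i ^ 2 = 1) :
    tInner (symXA X A) (symXA X A)
      = (1 / 3) * (∑ i, ∑ j, A i j ^ 2) + (2 / 3) * (∑ k, (A.mulVec X k) ^ 2) := by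
  have hexp : ∀ i j k : Fin n, symXA X A i j k * symXA X A i j k
      = (1/9) * (X i ^ 2 * A j k ^ 2) + (1/9) * (X j ^ 2 * A i k ^ 2)
        + (1/9) * (X k ^ 2 * A i j ^ 2)
        + (2/9) * ((X i * A i k) * (X j * A j k))
        + (2/9) * ((X i * A i j) * (X k * A j k))
        + (2/9) * ((X j * A i j) * (X k * A i k)) := by
    intro i j k
    unfold symXA
    rw [← hA.apply i j, ← hA.apply i k, ← hA.apply j k]
    ring
  unfold tInner
  have pull : ∀ (c : ℝ) (f : Fin n → Fin n → Fin n → ℝ),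
      (∑ i : Fin n, ∑ j : Fin n, ∑ k : Fin n, c * f i j k)
        = c * ∑ i : Fin n, ∑ j : Fin n, ∑ k : Fin n, f i j k := by
    intros c f; simp [Finset.mul_sum]
  simp only [hexp, Finset.sum_add_distrib]
  rw [pull (1/9) (fun i j k => X i ^ 2 * A j k ^ 2),
      pull (1/9) (fun i j k => X j ^ 2 * A i k ^ 2),
      pull (1/9) (fun i j k => X k ^ 2 * A i j ^ 2),
      pull (2/9) (fun i j k => (X i * A i k) * (X j * A j k)),
      pull (2/9) (fun i j k => (X i * A i j) * (X k * A j k)),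
      pull (2/9) (fun i j k => (X j * A i j) * (X k * A i k))]
  have hE1 : (∑ i : Fin n, ∑ j : Fin n, ∑ k : Fin n, X i ^ 2 * A j k ^ 2)
      = ∑ i : Fin n, ∑ j : Fin n, A i j ^ 2 := by
    simp only [← Finset.mul_sum]
    rw [← Finset.sum_mul, hX, one_mul]
  have hE2 : (∑ i : Fin n, ∑ j : Fin n, ∑ k : Fin n, X j ^ 2 * A i k ^ 2)
      = ∑ i : Fin n, ∑ j : Fin n, A i j ^ 2 := by
    refine Finset.sum_congr rfl fun i _ => ?_
    simp only [← Finset.mul_sum]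
    rw [← Finset.sum_mul, hX, one_mul]
  have hE3 : (∑ i : Fin n, ∑ j : Fin n, ∑ k : Fin n, X k ^ 2 * A i j ^ 2)
      = ∑ i : Fin n, ∑ j : Fin n, A i j ^ 2 := by
    refine Finset.sum_congr rfl fun i _ => Finset.sum_congr rfl fun j _ => ?_
    have h : ∀ k : Fin n, X k ^ 2 * A i j ^ 2 = A i j ^ 2 * X k ^ 2 := fun k => by ring
    simp only [h, ← Finset.mul_sum]
    rw [hX, mul_one]
  have hC1 : (∑ i : Fin n, ∑ j : Fin n, ∑ k : Fin n, (X i * A i k) * (X j * A j k))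
      = ∑ k, (A.mulVec X k) ^ 2 := by
    rw [aux_sum3_split_k (fun i k => X i * A i k) (fun j k => X j * A j k)]
    refine Finset.sum_congr rfl fun k _ => ?_
    rw [aux_Hmv A hA X k]; ring
  have hC2 : (∑ i : Fin n, ∑ j : Fin n, ∑ k : Fin n, (X i * A i j) * (X k * A j k))
      = ∑ k, (A.mulVec X k) ^ 2 := by
    rw [aux_sum3_split_j (fun i j => X i * A i j) (fun k j => X k * A j k)]
    refine Finset.sum_congr rfl fun j _ => ?_
    rw [aux_Hmv A hA X j, aux_Hmv' A X j]; ring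
  have hC3 : (∑ i : Fin n, ∑ j : Fin n, ∑ k : Fin n, (X j * A i j) * (X k * A i k))
      = ∑ k, (A.mulVec X k) ^ 2 := by
    rw [aux_sum3_split_i (fun j i => X j * A i j) (fun k i => X k * A i k)]
    refine Finset.sum_congr rfl fun i _ => ?_
    rw [aux_Hmv' A X i]; ring
  rw [hE1, hE2, hE3, hC1, hC2, hC3]
  ring

/-- norm of the symmetric traceless projection of `X⊗A`:
`|T − T^tr|² = (1/3)|A|² + (2/3)|AX|² − (1/(3(n+2)))|2AX + (tr A)X|²`. -/
theorem norm_sq_traceless_projection_symXA {n : ℕ}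
    (A : Matrix (Fin n) (Fin n) ℝ) (hA : A.IsSymm)
    (X : Fin n → ℝ) (hX : ∑ i, X i ^ 2 = 1) :
    tInner (symXA X A - tracePart (symXA X A)) (symXA X A - tracePart (symXA X A)) =
      (1 / 3) * (∑ i, ∑ j, A i j ^ 2) + (2 / 3) * (∑ k, (A.mulVec X k) ^ 2)
        - (1 / (3 * ((n : ℝ) + 2))) * ∑ k, (2 * A.mulVec X k + Matrix.trace A * X k) ^ 2 := by
  have hsym := aux_totSym_symXA X A hA
  rw [aux_tInner_sub, aux_inner_tracePart _ hsym, aux_inner_tracePart_self,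
    aux_inner_symXA_self A hA X hX]
  have ht : (∑ k, traceVec (symXA X A) k ^ 2)
      = (1/9) * ∑ k, (2 * A.mulVec X k + Matrix.trace A * X k) ^ 2 := by
    rw [Finset.mul_sum]
    refine Finset.sum_congr rfl fun k _ => ?_
    rw [aux_traceVec_symXA X A hA k]; ring
  rw [ht]
  have hn : ((n:ℝ) + 2) ≠ 0 := by positivity
  field_simp
  ring
end

section
/- Algebraic core of the improved Kato inequality (Proposition 4.3): for every n ≥ 1 there exists a constant c < 1, depending only on n, such that for every n×n real symmetric matrix A and every unit vector X ∈ ℝⁿ, |(X⊗A)^{sym} − ((X⊗A)^{sym})^{tr}| ≤ c |A|. -/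
open scoped BigOperators

namespace KatoAux
variable {n : ℕ}

lemma sum3_const_mul (c : ℝ) (F : Fin n → Fin n → Fin n → ℝ) :
    ∑ i, ∑ j, ∑ k, c * F i j k = c * ∑ i, ∑ j, ∑ k, F i j k := by
  simp [Finset.mul_sum]

lemma sum3_rot (F : Fin n → Fin n → Fin n → ℝ) :
    ∑ i, ∑ j, ∑ k, F i j k = ∑ k, ∑ i, ∑ j, F i j k :=
  calc ∑ i, ∑ j, ∑ k, F i j k = ∑ i, ∑ k, ∑ j, F i j k :=
        Finset.sum_congr rfl fun _ _ => Finset.sum_comm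
    _ = ∑ k, ∑ i, ∑ j, F i j k := Finset.sum_comm

lemma sum_ite_const (P : Prop) [Decidable P] (f : Fin n → ℝ) :
    (∑ k, if P then f k else 0) = if P then ∑ k, f k else 0 := by split_ifs <;> simp

lemma tInner_sub_sub (P Q : Tensor3 n) :
    tInner (P - Q) (P - Q) = tInner P P - 2 * tInner P Q + tInner Q Q := by
  have h : ∀ a b : ℝ, (a - b) * (a - b) = a * a - 2 * (a * b) + b * b := fun a b => by ring
  simp only [tInner, Pi.sub_apply, h, Finset.sum_add_distrib, Finset.sum_sub_distrib,
    Finset.mul_sum]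

end KatoAux

section Main
variable {n : ℕ} (A : Matrix (Fin n) (Fin n) ℝ) (X : Fin n → ℝ)

-- main computation lemma
theorem key_identity (hA : A.IsSymm) (hX : ∑ i, X i ^ 2 = 1) :
    tInner (symXA X A - tracePart (symXA X A)) (symXA X A - tracePart (symXA X A))
      = (∑ i, ∑ j, A i j ^ 2)/3 + 2*(∑ i, (∑ j, A i j * X j)^2)/3
        - (4*(∑ i, (∑ j, A i j * X j)^2)
           + 4*(∑ i, A i i)*(∑ i, X i * (∑ j, A i j * X j))
           + (∑ i, A i i)^2)/(3*((n:ℝ)+2)) := by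
  set T := symXA X A with hT
  set v : Fin n → ℝ := fun i => ∑ j, A i j * X j with hv
  set s : ℝ := ∑ i, A i i with hs
  set N : ℝ := ∑ i, ∑ j, A i j ^ 2 with hN
  set q : ℝ := ∑ i, X i * v i with hq
  set u : ℝ := ∑ i, v i ^ 2 with hu
  have haA : ∀ i j, A j i = A i j := fun i j => hA.apply i j
  have hXA : ∀ k, (∑ i, X i * A i k) = v k := by
    intro k
    rw [hv]
    exact Finset.sum_congr rfl fun i _ => by rw [haA k i, mul_comm]
  have hXA2 : ∀ j, (∑ k, X k * A j k) = v j := by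
    intro j
    rw [hv]
    exact Finset.sum_congr rfl fun k _ => by rw [mul_comm]

  -- blocks for tInner T T
  have hS1 : ∑ i, ∑ j, ∑ k, X i^2 * A j k^2 = N := by
    simp only [← Finset.mul_sum]
    rw [← Finset.sum_mul, hX, one_mul, hN]
  have hS2 : ∑ i, ∑ j, ∑ k, X j^2 * A i k^2 = N := by
    rw [Finset.sum_comm]
    simp only [← Finset.mul_sum]
    rw [← Finset.sum_mul, hX, one_mul, hN]
  have hS3 : ∑ i, ∑ j, ∑ k, X k^2 * A i j^2 = N := by
    have h1 : ∀ i j : Fin n, ∑ k, X k^2 * A i j^2 = A i j ^2 := by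
      intro i j
      rw [← Finset.sum_mul, hX, one_mul]
    simp only [h1]
    exact hN.symm
  have hE4 : ∑ i, ∑ j, ∑ k, (X i * A i k) * (X j * A j k) = u := by
    rw [KatoAux.sum3_rot]
    have h1 : ∀ k : Fin n, ∑ i, ∑ j, (X i * A i k) * (X j * A j k) = v k ^ 2 := by
      intro k
      rw [← Finset.sum_mul_sum, hXA k]
      ring
    simp only [h1, hu]
  have hE5 : ∑ i, ∑ j, ∑ k, (X i * A i j) * (X k * A j k) = u := by
    rw [Finset.sum_comm]
    have h1 : ∀ j : Fin n, ∑ i, ∑ k, (X i * A i j) * (X k * A j k) = v j ^ 2 := by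
      intro j
      rw [← Finset.sum_mul_sum, hXA j, hXA2 j]
      ring
    simp only [h1, hu]
  have hE6 : ∑ i, ∑ j, ∑ k, (X j * A i j) * (X k * A i k) = u := by
    have h1 : ∀ i : Fin n, ∑ j, ∑ k, (X j * A i j) * (X k * A i k) = v i ^ 2 := by
      intro i
      rw [← Finset.sum_mul_sum, hXA2 i]
      ring
    simp only [h1, hu]
  have hC1 : 9 * tInner T T = 3*N + 6*u := by
    have key : ∀ i j k : Fin n, 9 * (T i j k * T i j k)
        = X i^2*A j k^2 + X j^2*A i k^2 + X k^2*A i j^2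
          + 2*((X i * A i k) * (X j * A j k)) + 2*((X i * A i j) * (X k * A j k))
          + 2*((X j * A i j) * (X k * A i k)) := by
      intro i j k
      simp only [hT, symXA]
      ring
    calc 9 * tInner T T
        = ∑ i, ∑ j, ∑ k, 9 * (T i j k * T i j k) := by
          simp only [tInner, Finset.mul_sum]
      _ = 3*N + 6*u := by
          simp only [key, Finset.sum_add_distrib]
          rw [hS1, hS2, hS3, KatoAux.sum3_const_mul, KatoAux.sum3_const_mul,
            KatoAux.sum3_const_mul, hE4, hE5, hE6]
          ring

  -- trace vector
  set t : Fin n → ℝ := fun k => (2 * v k + s * X k)/3 with htdef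
  have hTijj : ∀ i, ∑ j, T i j j = t i := by
    intro i
    have h1 : ∀ j, T i j j = (1/3) * (X i * A j j) + (2/3) * (X j * A i j) := by
      intro j
      simp only [hT, symXA]
      ring
    simp only [h1, Finset.sum_add_distrib, ← Finset.mul_sum]
    rw [hXA2 i]
    simp only [htdef, ← hs]
    ring
  have hTiji : ∀ j, ∑ i, T i j i = t j := by
    intro j
    have h1 : ∀ i, T i j i = (1/3) * (X j * A i i) + (1/3) * (X i * A j i) + (1/3) * (X i * A i j) := by
      intro i
      simp only [hT, symXA]
      ring
    simp only [h1, Finset.sum_add_distrib, ← Finset.mul_sum]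
    have e1 : ∑ i, X i * A j i = v j := hXA2 j
    rw [e1]
    simp only [htdef, ← hs, hXA j]
    ring
  have hTiik : ∀ k, ∑ i, T i i k = t k := by
    intro k
    have h1 : ∀ i, T i i k = (2/3) * (X i * A i k) + (1/3) * (X k * A i i) := by
      intro i
      simp only [hT, symXA]
      ring
    simp only [h1, Finset.sum_add_distrib, ← Finset.mul_sum]
    rw [hXA k]
    simp only [htdef, ← hs]
    ring
  have ht : traceVec T = t := funext fun k => hTiik k
  -- inner product with the trace part
  have hST : ∀ S : Tensor3 n, tInner S (tracePart T)
      = (1/((n:ℝ)+2)) * ((∑ i, ∑ j, S i j j * t i) + (∑ i, ∑ j, S i j i * t j)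
          + (∑ i, ∑ k, S i i k * t k)) := by
    intro S
    have h1 : ∀ i j k, S i j k * tracePart T i j k
        = (1/((n:ℝ)+2)) * ((if j = k then S i j k * t i else 0)
            + ((if i = k then S i j k * t j else 0) + (if i = j then S i j k * t k else 0))) := by
      intro i j k
      simp only [tracePart, ht]
      by_cases h1 : j = k <;> by_cases h2 : i = k <;> by_cases h3 : i = j <;>
        simp [h1, h2, h3, eq_comm] <;> ring
    simp only [tInner, h1, KatoAux.sum3_const_mul, Finset.sum_add_distrib]
    congr 1
    have e1 : ∀ i j : Fin n, (∑ k, if j = k then S i j k * t i else 0) = S i j j * t i := by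
      intro i j
      simp
    have e2 : ∀ i j : Fin n, (∑ k, if i = k then S i j k * t j else 0) = S i j i * t j := by
      intro i j
      simp
    have e3 : ∀ i : Fin n, (∑ j, ∑ k, if i = j then S i j k * t k else 0)
        = ∑ k, S i i k * t k := by
      intro i
      simp only [KatoAux.sum_ite_const]
      simp
    simp only [e1, e2, e3, Finset.sum_add_distrib]
    ring

  have hn2 : ((n:ℝ)+2) ≠ 0 := by positivity
  have hC3 : tInner T (tracePart T) = (3/((n:ℝ)+2)) * ∑ k, t k * t k := by
    rw [hST T]
    have e1 : ∀ i : Fin n, (∑ j, T i j j * t i) = t i * t i := fun i => by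
      rw [← Finset.sum_mul, hTijj i]
    have e2 : (∑ i, ∑ j, T i j i * t j) = ∑ j, t j * t j := by
      rw [Finset.sum_comm]
      exact Finset.sum_congr rfl fun j _ => by rw [← Finset.sum_mul, hTiji j]
    have e3 : (∑ i, ∑ k, T i i k * t k) = ∑ k, t k * t k := by
      rw [Finset.sum_comm]
      exact Finset.sum_congr rfl fun k _ => by rw [← Finset.sum_mul, hTiik k]
    simp only [e1, e2, e3]
    ring
  have hP1 : ∀ i, ∑ j, tracePart T i j j = t i := by
    intro i
    have h1 : ∀ j, tracePart T i j j
        = (1/((n:ℝ)+2)) * (t i + ((if i = j then t j else 0) + (if i = j then t j else 0))) := by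
      intro j
      by_cases h : i = j
      · simp only [tracePart, ht, h, eq_self_iff_true, if_true]
        ring
      · simp only [tracePart, ht, eq_self_iff_true, if_true, if_neg h]
        ring
    simp only [h1, ← Finset.mul_sum, Finset.sum_add_distrib, Finset.sum_const,
      Finset.card_univ, Fintype.card_fin, Fintype.sum_ite_eq, nsmul_eq_mul]
    field_simp
    ring
  have hP2 : ∀ j, ∑ i, tracePart T i j i = t j := by
    intro j
    have h1 : ∀ i, tracePart T i j i
        = (1/((n:ℝ)+2)) * (t j + ((if j = i then t i else 0) + (if i = j then t i else 0))) := by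
      intro i
      by_cases h : i = j
      · simp only [tracePart, ht, h, eq_self_iff_true, if_true]
        ring
      · simp only [tracePart, ht, eq_self_iff_true, if_true, if_neg h, if_neg (Ne.symm h)]
        ring
    simp only [h1, ← Finset.mul_sum, Finset.sum_add_distrib, Finset.sum_const,
      Finset.card_univ, Fintype.card_fin, Fintype.sum_ite_eq, Fintype.sum_ite_eq', nsmul_eq_mul]
    field_simp
    ring
  have hP3 : ∀ k, ∑ i, tracePart T i i k = t k := by
    intro k
    have h1 : ∀ i, tracePart T i i k
        = (1/((n:ℝ)+2)) * (t k + ((if i = k then t i else 0) + (if i = k then t i else 0))) := by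
      intro i
      by_cases h : i = k
      · simp only [tracePart, ht, h, eq_self_iff_true, if_true]
        ring
      · simp only [tracePart, ht, eq_self_iff_true, if_true, if_neg h]
        ring
    simp only [h1, ← Finset.mul_sum, Finset.sum_add_distrib, Finset.sum_const,
      Finset.card_univ, Fintype.card_fin, Fintype.sum_ite_eq', nsmul_eq_mul]
    field_simp
    ring
  have hC4 : tInner (tracePart T) (tracePart T) = (3/((n:ℝ)+2)) * ∑ k, t k * t k := by
    rw [hST (tracePart T)]
    have e1 : ∀ i : Fin n, (∑ j, tracePart T i j j * t i) = t i * t i := fun i => by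
      rw [← Finset.sum_mul, hP1 i]
    have e2 : (∑ i, ∑ j, tracePart T i j i * t j) = ∑ j, t j * t j := by
      rw [Finset.sum_comm]
      exact Finset.sum_congr rfl fun j _ => by rw [← Finset.sum_mul, hP2 j]
    have e3 : (∑ i, ∑ k, tracePart T i i k * t k) = ∑ k, t k * t k := by
      rw [Finset.sum_comm]
      exact Finset.sum_congr rfl fun k _ => by rw [← Finset.sum_mul, hP3 k]
    simp only [e1, e2, e3]
    ring
  have htau : 9 * (∑ k, t k * t k) = 4*u + 4*s*q + s^2 := by
    have h1 : ∀ k, 9 * (t k * t k) = 4 * (v k^2) + (4*s) * (X k * v k) + s^2 * (X k^2) := by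
      intro k
      simp only [htdef]
      ring
    rw [Finset.mul_sum]
    simp only [h1, Finset.sum_add_distrib, ← Finset.mul_sum]
    rw [hX, ← hq, ← hu]
    ring
  rw [KatoAux.tInner_sub_sub T (tracePart T), hC3, hC4]
  have hTT : tInner T T = N/3 + 2*u/3 := by linarith
  have hEt : (∑ k, t k * t k) = (4*u+4*s*q+s^2)/9 := by linarith
  rw [hTT, hEt]
  field_simp
  ring

theorem scalar_core (nR N u q s M w : ℝ) (hn : 2 ≤ nR)
    (hw : w = u - q^2) (hw0 : 0 ≤ w)
    (hM : M = N - 2*u + q^2) (hM0 : 0 ≤ M)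
    (hr : (s - q)^2 ≤ (nR - 1) * M) :
    N/3 + 2*u/3 - (4*u + 4*s*q + s^2)/(3*(nR+2)) ≤ (10*nR-10)/(10*nR-7) * N := by
  have h1 : (0:ℝ) < 3*(nR + 2) := by linarith
  have h2 : (0:ℝ) < 10*nR - 7 := by linarith
  have hu : u = w + q^2 := by linarith
  subst hu
  have hN : N = M + 2*w + q^2 := by linarith
  subst hN
  have e1 : (M + 2*w + q^2)/3 + 2*(w + q^2)/3 - (4*(w + q^2) + 4*s*q + s^2)/(3*(nR+2))
      = (((M + 2*w + q^2) + 2*(w + q^2))*(nR+2) - (4*(w + q^2) + 4*s*q + s^2)) / (3*(nR+2)) := by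
    field_simp
  have e2 : (10*nR-10)/(10*nR-7) * (M + 2*w + q^2) = ((10*nR-10)*(M + 2*w + q^2))/(10*nR-7) := by
    ring
  rw [e1, e2, div_le_div_iff₀ h1 h2]
  nlinarith [sq_nonneg (27*(nR-1)*q + (10*nR-7)*(s-q)),
    mul_nonneg (mul_nonneg (by linarith : (0:ℝ) ≤ nR+2) (by linarith : (0:ℝ) ≤ 10*nR-7))
      (by linarith : (0:ℝ) ≤ (nR-1)*M - (s-q)^2),
    mul_nonneg (mul_nonneg (mul_nonneg hM0 (by linarith : (0:ℝ) ≤ nR-1))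
      (by linarith : (0:ℝ) ≤ nR+2)) (by linarith : (0:ℝ) ≤ 170*nR - 200),
    mul_nonneg (mul_nonneg hw0 (by linarith : (0:ℝ) ≤ nR-1))
      (by nlinarith : (0:ℝ) ≤ 18*(nR+2)*(10*nR-7)+36*(10*nR-7)-162*(nR+2))]

theorem main_bound {n : ℕ} (A : Matrix (Fin n) (Fin n) ℝ) (X : Fin n → ℝ)
    (hn : 2 ≤ n) (hA : A.IsSymm) (hX : ∑ i, X i ^ 2 = 1) :
    tInner (symXA X A - tracePart (symXA X A)) (symXA X A - tracePart (symXA X A))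
      ≤ (10*(n:ℝ)-10)/(10*(n:ℝ)-7) * (∑ i, ∑ j, A i j ^ 2) := by
  rw [key_identity A X hA hX]
  set v : Fin n → ℝ := fun i => ∑ j, A i j * X j with hv
  set s : ℝ := ∑ i, A i i with hs
  set N : ℝ := ∑ i, ∑ j, A i j ^ 2 with hN
  set q : ℝ := ∑ i, X i * v i with hq
  set u : ℝ := ∑ i, v i ^ 2 with hu
  have haA : ∀ i j, A j i = A i j := fun i j => hA.apply i j
  have hvi : ∀ i, (∑ j, A i j * X j) = v i := fun i => rfl
  have hXA : ∀ k, (∑ i, X i * A i k) = v k := by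
    intro k
    rw [hv]
    exact Finset.sum_congr rfl fun i _ => by rw [haA k i, mul_comm]
  -- Cauchy-Schwarz: q^2 ≤ u
  have hq2 : q^2 ≤ u := by
    have h := Finset.sum_mul_sq_le_sq_mul_sq Finset.univ X v
    rw [hX, one_mul] at h
    exact h
  -- u ≤ N
  have huN : u ≤ N := by
    rw [hu, hN]
    refine Finset.sum_le_sum fun i _ => ?_
    have h := Finset.sum_mul_sq_le_sq_mul_sq Finset.univ (fun j => A i j) X
    rw [hX, mul_one] at h
    exact h
  -- the projected matrix B
  set B : Fin n → Fin n → ℝ :=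
    fun i j => A i j - X i * v j - v i * X j + q * (X i * X j) with hB
  have hBX : ∀ i, ∑ j, B i j * X j = 0 := by
    intro i
    have h1 : ∀ j, B i j * X j
        = A i j * X j - X i * (X j * v j) - v i * (X j^2) + (q * X i) * (X j^2) := by
      intro j
      simp only [hB]
      ring
    simp only [h1, Finset.sum_add_distrib, Finset.sum_sub_distrib, ← Finset.mul_sum]
    rw [hX, ← hq, hvi i]
    ring
  have hXB : ∀ j, ∑ i, X i * B i j = 0 := by
    intro j
    have h1 : ∀ i, X i * B i j
        = X i * A i j - v j * (X i^2) - X j * (X i * v i) + (q * X j) * (X i^2) := by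
      intro i
      simp only [hB]
      ring
    simp only [h1, Finset.sum_add_distrib, Finset.sum_sub_distrib, ← Finset.mul_sum]
    rw [hX, ← hq, hXA j]
    ring
  have e2 : ∑ i, ∑ j, (X i * A i j) * v j = u := by
    rw [Finset.sum_comm]
    have h1 : ∀ j : Fin n, (∑ i, (X i * A i j) * v j) = v j ^ 2 := fun j => by
      rw [← Finset.sum_mul, hXA j]; ring
    simp only [h1, ← hu]
  have e3 : ∑ i, ∑ j, (A i j * X j) * v i = u := by
    have h1 : ∀ i : Fin n, (∑ j, (A i j * X j) * v i) = v i ^ 2 := fun i => by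
      rw [← Finset.sum_mul, hvi i]; ring
    simp only [h1, ← hu]
  have e4 : ∑ i, ∑ j, (A i j * X j) * X i = q := by
    have h1 : ∀ i : Fin n, (∑ j, (A i j * X j) * X i) = X i * v i := fun i => by
      rw [← Finset.sum_mul, hvi i]; ring
    simp only [h1, ← hq]
  have hBA : ∑ i, ∑ j, B i j * A i j = N - 2*u + q^2 := by
    have h1 : ∀ i j, B i j * A i j
        = A i j^2 - (X i * A i j) * v j - (A i j * X j) * v i + q * ((A i j * X j) * X i) := by
      intro i j
      simp only [hB]
      ring
    simp only [h1, Finset.sum_add_distrib, Finset.sum_sub_distrib, ← Finset.mul_sum]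
    rw [← hN, e2, e3, e4]
    ring
  have hBC1 : ∑ i, ∑ j, B i j * (X i * v j) = 0 := by
    rw [Finset.sum_comm]
    have h1 : ∀ j : Fin n, (∑ i, B i j * (X i * v j)) = 0 := by
      intro j
      have h2 : ∀ i, B i j * (X i * v j) = (X i * B i j) * v j := fun i => by ring
      simp only [h2]
      rw [← Finset.sum_mul, hXB j, zero_mul]
    simp only [h1, Finset.sum_const_zero]
  have hBC2 : ∑ i, ∑ j, B i j * (v i * X j) = 0 := by
    have h1 : ∀ i : Fin n, (∑ j, B i j * (v i * X j)) = 0 := by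
      intro i
      have h2 : ∀ j, B i j * (v i * X j) = (B i j * X j) * v i := fun j => by ring
      simp only [h2]
      rw [← Finset.sum_mul, hBX i, zero_mul]
    simp only [h1, Finset.sum_const_zero]
  have hBC3 : ∑ i, ∑ j, B i j * (q * (X i * X j)) = 0 := by
    have h1 : ∀ i : Fin n, (∑ j, B i j * (q * (X i * X j))) = 0 := by
      intro i
      have h2 : ∀ j, B i j * (q * (X i * X j)) = (B i j * X j) * (q * X i) := fun j => by ring
      simp only [h2]
      rw [← Finset.sum_mul, hBX i, zero_mul]
    simp only [h1, Finset.sum_const_zero]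
  have hBsq : ∑ i, ∑ j, B i j ^ 2 = N - 2*u + q^2 := by
    have h1 : ∀ i j, B i j ^ 2
        = B i j * A i j - B i j * (X i * v j) - B i j * (v i * X j) + B i j * (q * (X i * X j)) := by
      intro i j
      nth_rewrite 1 [hB]
      ring
    simp only [h1, Finset.sum_add_distrib, Finset.sum_sub_distrib]
    rw [hBA, hBC1, hBC2, hBC3]
    ring
  have hM0 : 0 ≤ N - 2*u + q^2 := by
    rw [← hBsq]
    exact Finset.sum_nonneg fun i _ => Finset.sum_nonneg fun j _ => sq_nonneg _
  have htrB : ∑ i, B i i = s - q := by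
    have h1 : ∀ i, B i i = A i i - 2*(X i * v i) + q * (X i^2) := by
      intro i
      simp only [hB]
      ring
    simp only [h1, Finset.sum_add_distrib, Finset.sum_sub_distrib, ← Finset.mul_sum]
    rw [hX, ← hq, ← hs]
    ring
  set G : Fin n → Fin n → ℝ := fun i j => (if i = j then (1:ℝ) else 0) - X i * X j with hG
  have hGB : ∑ i, ∑ j, B i j * G i j = s - q := by
    have h1 : ∀ i j, B i j * G i j = (if i = j then B i j else 0) - (B i j * X j) * X i := by
      intro i j
      by_cases h : i = j
      · simp only [hG, h, eq_self_iff_true, if_true]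
        ring
      · simp only [hG, if_neg h]
        ring
    have h2 : ∀ i : Fin n, (∑ j, B i j * G i j) = B i i := by
      intro i
      simp only [h1, Finset.sum_sub_distrib, Fintype.sum_ite_eq]
      rw [← Finset.sum_mul, hBX i]
      ring
    simp only [h2]
    exact htrB
  have hGG : ∑ i, ∑ j, G i j ^ 2 = (n:ℝ) - 1 := by
    have h1 : ∀ i j, G i j ^ 2
        = (if i = j then (1:ℝ) else 0) - 2*(if i = j then X i * X j else 0) + (X i^2) * (X j^2) := by
      intro i j
      by_cases h : i = j
      · simp only [hG, h, eq_self_iff_true, if_true]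
        ring
      · simp only [hG, if_neg h]
        ring
    have hXX : ∀ i : Fin n, X i * X i = X i ^ 2 := fun i => by ring
    simp only [h1, Finset.sum_add_distrib, Finset.sum_sub_distrib, Fintype.sum_ite_eq,
      ← Finset.mul_sum, Finset.sum_const, Finset.card_univ, Fintype.card_fin, nsmul_eq_mul]
    simp only [hXX, hX]
    simp only [mul_one]
    rw [hX]
    ring_nf
  -- Cauchy-Schwarz over the product type
  have hCS := Finset.sum_mul_sq_le_sq_mul_sq Finset.univ
    (fun p : Fin n × Fin n => B p.1 p.2) (fun p : Fin n × Fin n => G p.1 p.2)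
  have cv1 : (∑ p : Fin n × Fin n, B p.1 p.2 * G p.1 p.2) = ∑ i, ∑ j, B i j * G i j := by
    rw [← Finset.univ_product_univ, Finset.sum_product]
  have cv2 : (∑ p : Fin n × Fin n, B p.1 p.2 ^ 2) = ∑ i, ∑ j, B i j ^ 2 := by
    rw [← Finset.univ_product_univ, Finset.sum_product]
  have cv3 : (∑ p : Fin n × Fin n, G p.1 p.2 ^ 2) = ∑ i, ∑ j, G i j ^ 2 := by
    rw [← Finset.univ_product_univ, Finset.sum_product]
  rw [cv1, cv2, cv3, hGB, hBsq, hGG] at hCS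
  -- assemble
  have hncast : (2:ℝ) ≤ (n:ℝ) := by exact_mod_cast hn
  exact scalar_core (n:ℝ) N u q s (N - 2*u + q^2) (u - q^2) hncast rfl
    (by linarith) rfl hM0 (by linarith [hCS])

end Main

/-- algebraic core of the improved Kato inequality (Proposition 4.3):
there is a dimensional constant `c < 1` with
`|(X⊗A)^{sym} − ((X⊗A)^{sym})^{tr}| ≤ c |A|` for all symmetric `A` and unit `X`. -/
theorem improved_kato_algebraic (n : ℕ) (hn : 1 ≤ n) :
    ∃ c : ℝ, c < 1 ∧
      ∀ (A : Matrix (Fin n) (Fin n) ℝ), A.IsSymm →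
      ∀ (X : Fin n → ℝ), (∑ i, X i ^ 2 = 1) →
        tNorm (symXA X A - tracePart (symXA X A)) ≤
          c * Real.sqrt (∑ i, ∑ j, A i j ^ 2) := by
  refine ⟨Real.sqrt ((10*(n:ℝ)-10)/(10*(n:ℝ)-7)), ?_, ?_⟩
  · have hn1 : (1:ℝ) ≤ (n:ℝ) := by exact_mod_cast hn
    have hd : (0:ℝ) < 10*(n:ℝ)-7 := by linarith
    have h0 : 0 ≤ (10*(n:ℝ)-10)/(10*(n:ℝ)-7) := div_nonneg (by linarith) (le_of_lt hd)
    have hlt : (10*(n:ℝ)-10)/(10*(n:ℝ)-7) < 1 := by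
      rw [div_lt_one hd]
      linarith
    calc Real.sqrt ((10*(n:ℝ)-10)/(10*(n:ℝ)-7)) < Real.sqrt 1 := Real.sqrt_lt_sqrt h0 hlt
      _ = 1 := Real.sqrt_one
  · intro A hA X hX
    rcases eq_or_lt_of_le hn with h1 | h2
    · -- the case n = 1
      subst h1
      have hD : symXA X A - tracePart (symXA X A) = 0 := by
        funext i j k
        have hi : i = 0 := Subsingleton.elim i 0
        have hj : j = 0 := Subsingleton.elim j 0
        have hk : k = 0 := Subsingleton.elim k 0
        subst hi; subst hj; subst hk
        simp [symXA, tracePart, traceVec, Fin.sum_univ_one]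
        push_cast
        ring
      rw [hD]
      have h0 : tNorm (0 : Tensor3 1) = 0 := by
        simp [tNorm, tInner]
      rw [h0]
      positivity
    · -- the case 2 ≤ n
      have hb := main_bound A X h2 hA hX
      have hn1 : (1:ℝ) ≤ (n:ℝ) := by exact_mod_cast hn
      have hd : (0:ℝ) < 10*(n:ℝ)-7 := by linarith
      have h0 : 0 ≤ (10*(n:ℝ)-10)/(10*(n:ℝ)-7) := div_nonneg (by linarith) (le_of_lt hd)
      simp only [tNorm]
      calc Real.sqrt (tInner (symXA X A - tracePart (symXA X A))
              (symXA X A - tracePart (symXA X A)))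
          ≤ Real.sqrt ((10*(n:ℝ)-10)/(10*(n:ℝ)-7) * (∑ i, ∑ j, A i j ^ 2)) :=
            Real.sqrt_le_sqrt hb
        _ = Real.sqrt ((10*(n:ℝ)-10)/(10*(n:ℝ)-7)) * Real.sqrt (∑ i, ∑ j, A i j ^ 2) :=
            Real.sqrt_mul h0 _
end
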